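/- arXiv:1608.02415 — 2 statements merged into one kernel-verified Lean document; each statement's English description precedes it below -/
import Mathlib

section
/- Sparseness of holes: Fix a decreasing function g and ε > 0 and a lattice environment w on (Z^d, E_d), d ≥ 2, with b ≥ 2d a natural number. Suppose for all large n, every box B_b(z) with z ∈ B_{n+b} contains at most 3d−1 edges of conductance ≤ g(n^{1−ε}), and let D_n be the unique infinite open cluster of the environment where edges with w_e ≤ g(n^{1−ε}) are closed. Then for n large enough, the hole set I_n = B_n ∖ D_n is b-sparse, that is, every translated box B_b(z), z ∈ Z^d, contains at most one site of I_n. -/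
namespace Stmt15Aux

/-- unit vector in direction `i` -/
def unitv (d : ℕ) (i : Fin d) : Fin d → ℤ := fun j => if j = i then 1 else 0

@[simp] lemma unitv_self (d : ℕ) (i : Fin d) : unitv d i i = 1 := by simp [unitv]

lemma unitv_ne (d : ℕ) {i j : Fin d} (h : j ≠ i) : unitv d i j = 0 := by simp [unitv, h]

/-- lattice adjacency -/
def Adj {d : ℕ} (p q : Fin d → ℤ) : Prop :=
  ∃ i : Fin d, q = p + unitv d i ∨ p = q + unitv d i

lemma Adj.symm {d : ℕ} {p q : Fin d → ℤ} (h : Adj p q) : Adj q p := by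
  obtain ⟨i, h | h⟩ := h
  · exact ⟨i, Or.inr h⟩
  · exact ⟨i, Or.inl h⟩

lemma Adj.abs_sub_le {d : ℕ} {p q : Fin d → ℤ} (h : Adj p q) (i : Fin d) :
    |p i - q i| ≤ 1 := by
  obtain ⟨j, h | h⟩ := h <;> rw [h] <;> by_cases hij : i = j <;>
    simp [Pi.add_apply, hij, unitv]

lemma Adj.ne {d : ℕ} {p q : Fin d → ℤ} (h : Adj p q) : p ≠ q := by
  obtain ⟨j, h | h⟩ := h <;> rw [h] <;> intro hc
  · have := congrFun hc j; simp [Pi.add_apply] at this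
  · have := congrFun hc j; simp [Pi.add_apply] at this

lemma adj_update_up {d : ℕ} (s : Fin d → ℤ) (i : Fin d) :
    Adj s (Function.update s i (s i + 1)) := by
  refine ⟨i, Or.inl ?_⟩
  funext j
  by_cases hj : j = i
  · subst hj; simp [Function.update_self, unitv]
  · simp [Function.update_of_ne hj, unitv, hj]

lemma adj_update_down {d : ℕ} (s : Fin d → ℤ) (i : Fin d) :
    Adj s (Function.update s i (s i - 1)) := by
  refine ⟨i, Or.inr ?_⟩
  funext j
  by_cases hj : j = i
  · subst hj; simp [Function.update_self, unitv]
  · simp [Function.update_of_ne hj, unitv, hj]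

lemma adj_update_self_up {d : ℕ} (s : Fin d → ℤ) (i : Fin d) (t : ℤ) :
    Adj (Function.update s i t) (Function.update s i (t + 1)) := by
  have := adj_update_up (Function.update s i t) i
  simpa [Function.update_idem, Function.update_self] using this

/-- chain inside a set `S`, staying within the ball of radius `r` around `c`
(except possibly the start). -/
def BChain {d : ℕ} (S : Set (Fin d → ℤ)) (c : Fin d → ℤ) (r : ℤ)
    (p q : Fin d → ℤ) : Prop :=
  Relation.ReflTransGen (fun u v => Adj u v ∧ v ∈ S ∧ ∀ i, |v i - c i| ≤ r) p q

/-- plain chain inside a set `S` -/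
def SChain {d : ℕ} (S : Set (Fin d → ℤ)) (p q : Fin d → ℤ) : Prop :=
  Relation.ReflTransGen (fun u v => Adj u v ∧ v ∈ S) p q

lemma BChain.mem_ball {d : ℕ} {S : Set (Fin d → ℤ)} {c : Fin d → ℤ} {r : ℤ}
    {p q : Fin d → ℤ} (h : BChain S c r p q) (hp : ∀ i, |p i - c i| ≤ r) :
    ∀ i, |q i - c i| ≤ r := by
  induction h with
  | refl => exact hp
  | tail _ hstep ih => exact hstep.2.2

lemma BChain.mem_set {d : ℕ} {S : Set (Fin d → ℤ)} {c : Fin d → ℤ} {r : ℤ}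
    {p q : Fin d → ℤ} (h : BChain S c r p q) (hp : p ∈ S) : q ∈ S := by
  induction h with
  | refl => exact hp
  | tail _ hstep ih => exact hstep.2.1

/-- two-sided ball predicate (omega-friendly) -/
def InBall {d : ℕ} (c : Fin d → ℤ) (r : ℤ) (s : Fin d → ℤ) : Prop :=
  ∀ i, c i - r ≤ s i ∧ s i ≤ c i + r

lemma Adj.sub_le {d : ℕ} {p q : Fin d → ℤ} (h : Adj p q) (i : Fin d) :
    p i - 1 ≤ q i ∧ q i ≤ p i + 1 := by
  have := h.abs_sub_le i
  rw [abs_le] at this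
  omega

/-- chain inside a set `S`, staying within the ball of radius `r` around `c`
(except possibly the start). -/
def BChain' {d : ℕ} (S : Set (Fin d → ℤ)) (c : Fin d → ℤ) (r : ℤ)
    (p q : Fin d → ℤ) : Prop :=
  Relation.ReflTransGen (fun u v => Adj u v ∧ v ∈ S ∧ InBall c r v) p q

lemma BChain'.mem_ball {d : ℕ} {S : Set (Fin d → ℤ)} {c : Fin d → ℤ} {r : ℤ}
    {p q : Fin d → ℤ} (h : BChain' S c r p q) (hp : InBall c r p) :
    InBall c r q := by
  induction h with
  | refl => exact hp
  | tail _ hstep ih => exact hstep.2.2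

lemma BChain'.mem_set {d : ℕ} {S : Set (Fin d → ℤ)} {c : Fin d → ℤ} {r : ℤ}
    {p q : Fin d → ℤ} (h : BChain' S c r p q) (hp : p ∈ S) : q ∈ S := by
  induction h with
  | refl => exact hp
  | tail _ hstep ih => exact hstep.2.1

/-- first-exit lemma -/
lemma exit_lemma {d : ℕ} {S : Set (Fin d → ℤ)} {c : Fin d → ℤ} {R : ℤ}
    (hR : 0 ≤ R) {u z : Fin d → ℤ} (hch : SChain S u z) :
    InBall c R u → ¬ InBall c R z →
    ∃ w, BChain' S c (R + 1) u w ∧ InBall c (R + 1) w ∧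
      ∃ i, w i = c i + (R + 1) ∨ w i = c i - (R + 1) := by
  induction hch using Relation.ReflTransGen.head_induction_on with
  | refl => intro hu hz; exact absurd hu hz
  | head hstep hch ih =>
    rename_i p p'
    intro hp hz
    by_cases hp' : InBall c R p'
    · obtain ⟨w, hw1, hw2, hw3⟩ := ih hp' hz
      refine ⟨w, Relation.ReflTransGen.head ⟨hstep.1, hstep.2, ?_⟩ hw1, hw2, hw3⟩
      intro i; have := hp' i; omega
    · have hball : InBall c (R + 1) p' := by
        intro i
        have h1 := hstep.1.sub_le i
        have h2 := hp i
        omega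
      refine ⟨p', Relation.ReflTransGen.single ⟨hstep.1, hstep.2, hball⟩, hball, ?_⟩
      simp only [InBall, not_forall] at hp'
      obtain ⟨i0, hi0⟩ := hp'
      have h1 := hball i0
      refine ⟨i0, by omega⟩

/-- discrete intermediate value theorem along a bounded chain -/
lemma chain_ivt {d : ℕ} {S : Set (Fin d → ℤ)} {c : Fin d → ℤ} {r : ℤ}
    {u w : Fin d → ℤ} (hch : BChain' S c r u w) :
    u ∈ S → InBall c r u →
    ∀ (i : Fin d) (t : ℤ), ((u i ≤ t ∧ t ≤ w i) ∨ (w i ≤ t ∧ t ≤ u i)) →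
    ∃ v, v ∈ S ∧ InBall c r v ∧ v i = t := by
  induction hch using Relation.ReflTransGen.head_induction_on with
  | refl =>
    intro hu hub i t ht
    exact ⟨_, hu, hub, by omega⟩
  | head hstep hch ih =>
    rename_i p p'
    intro hp hpb i t ht
    by_cases hpt : p i = t
    · exact ⟨p, hp, hpb, hpt⟩
    · have hd := hstep.1.sub_le i
      exact ih hstep.2.1 hstep.2.2 i t (by omega)

/-- walking up along a fiber within `S` -/
lemma seg_chain_up {d : ℕ} {S : Set (Fin d → ℤ)} {c : Fin d → ℤ} {r : ℤ}
    (v : Fin d → ℤ) (i : Fin d) (hv : InBall c r v) :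
    ∀ k : ℕ, (∀ t : ℤ, v i < t → t ≤ v i + k → Function.update v i t ∈ S) →
    (v i + k ≤ c i + r) →
    BChain' S c r v (Function.update v i (v i + k)) := by
  intro k
  induction k with
  | zero =>
    intro _ _
    have : Function.update v i (v i + (0:ℕ)) = v := by
      funext j; by_cases hj : j = i
      · subst hj; simp
      · simp [Function.update_of_ne hj]
    rw [this]
    exact Relation.ReflTransGen.refl
  | succ k ih =>
    intro hseg hbound
    have hprev : BChain' S c r v (Function.update v i (v i + k)) := by
      apply ih
      · intro t h1 h2; exact hseg t h1 (by push_cast at h2 ⊢; omega)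
      · push_cast at hbound ⊢; omega
    apply hprev.tail
    refine ⟨?_, ?_, ?_⟩
    · have := adj_update_self_up v i (v i + k)
      convert this using 2
      push_cast; ring
    · apply hseg
      · push_cast; omega
      · push_cast; omega
    · intro j
      by_cases hj : j = i
      · subst hj; simp only [Function.update_self]
        have := hv j
        push_cast at hbound ⊢
        omega
      · simp only [Function.update_of_ne hj]; exact hv j

/-- walking down along a fiber within `S` -/
lemma seg_chain_down {d : ℕ} {S : Set (Fin d → ℤ)} {c : Fin d → ℤ} {r : ℤ}
    (v : Fin d → ℤ) (i : Fin d) (hv : InBall c r v) :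
    ∀ k : ℕ, (∀ t : ℤ, v i - k ≤ t → t < v i → Function.update v i t ∈ S) →
    (c i - r ≤ v i - k) →
    BChain' S c r v (Function.update v i (v i - k)) := by
  intro k
  induction k with
  | zero =>
    intro _ _
    have : Function.update v i (v i - (0:ℕ)) = v := by
      funext j; by_cases hj : j = i
      · subst hj; simp
      · simp [Function.update_of_ne hj]
    rw [this]
    exact Relation.ReflTransGen.refl
  | succ k ih =>
    intro hseg hbound
    have hprev : BChain' S c r v (Function.update v i (v i - k)) := by
      apply ih
      · intro t h1 h2; exact hseg t (by push_cast at h1 ⊢; omega) h2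
      · push_cast at hbound ⊢; omega
    apply hprev.tail
    refine ⟨?_, ?_, ?_⟩
    · refine ⟨i, Or.inr ?_⟩
      funext j
      by_cases hj : j = i
      · subst hj; simp only [Function.update_self, Pi.add_apply, unitv_self]
        push_cast; ring
      · simp only [Function.update_of_ne hj, Pi.add_apply, unitv_ne _ hj, add_zero]
    · apply hseg
      · push_cast; omega
      · push_cast; omega
    · intro j
      by_cases hj : j = i
      · subst hj; simp only [Function.update_self]
        have := hv j
        push_cast at hbound ⊢
        omega
      · simp only [Function.update_of_ne hj]; exact hv j

lemma update_add_unitv {d : ℕ} (v : Fin d → ℤ) (i : Fin d) (s : ℤ) :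
    Function.update v i s + unitv d i = Function.update v i (s + 1) := by
  funext j
  by_cases hj : j = i
  · subst hj; simp [Function.update_self, unitv]
  · simp [Function.update_of_ne hj, unitv_ne _ hj]

/-- run-end (upwards) -/
lemma runEnd_up {d : ℕ} {S : Set (Fin d → ℤ)} {v : Fin d → ℤ} (i : Fin d)
    {T : ℤ} :
    ∀ k : ℕ, ∀ v' : Fin d → ℤ, (∀ j, j ≠ i → v' j = v j) → v' ∈ S →
    ∀ t : ℤ, v' i < t → t ≤ T → (t - v' i - 1).toNat = k →
    Function.update v' i t ∉ S →
    ∃ s : ℤ, v' i ≤ s ∧ s + 1 ≤ T ∧ Function.update v i s ∈ S ∧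
      Function.update v i (s + 1) ∉ S ∧ (∀ j, j ≠ i → Function.update v i s j = v j) := by
  have hupd : ∀ (v' : Fin d → ℤ), (∀ j, j ≠ i → v' j = v j) →
      ∀ s : ℤ, Function.update v' i s = Function.update v i s := by
    intro v' hv' s
    funext j
    by_cases hj : j = i
    · subst hj; simp
    · simp [Function.update_of_ne hj, hv' j hj]
  intro k
  induction k with
  | zero =>
    intro v' hv' hvS t h1 h2 h3 h4
    have ht : t = v' i + 1 := by omega
    refine ⟨v' i, le_refl _, by omega, ?_, ?_, ?_⟩
    · rw [← hupd v' hv']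
      simpa [Function.update_eq_self] using hvS
    · rw [← hupd v' hv', ← ht]; exact h4
    · intro j hj; simp [Function.update_of_ne hj]
  | succ k ih =>
    intro v' hv' hvS t h1 h2 h3 h4
    by_cases hnext : Function.update v' i (v' i + 1) ∈ S
    · have hne : ∀ j, j ≠ i → Function.update v' i (v' i + 1) j = v j := by
        intro j hj; simp [Function.update_of_ne hj, hv' j hj]
      have := ih (Function.update v' i (v' i + 1)) hne hnext t
        (by simp [Function.update_self]; omega) h2
        (by simp [Function.update_self]; omega)
        (by rwa [Function.update_idem])
      simp only [Function.update_self] at this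
      obtain ⟨s, hs1, hs⟩ := this
      exact ⟨s, by omega, hs⟩
    · refine ⟨v' i, le_refl _, by omega, ?_, ?_, ?_⟩
      · rw [← hupd v' hv']
        simpa [Function.update_eq_self] using hvS
      · rw [← hupd v' hv']; exact hnext
      · intro j hj; simp [Function.update_of_ne hj]

/-- run-end (downwards) -/
lemma runEnd_down {d : ℕ} {S : Set (Fin d → ℤ)} {v : Fin d → ℤ} (i : Fin d)
    {T : ℤ} :
    ∀ k : ℕ, ∀ v' : Fin d → ℤ, (∀ j, j ≠ i → v' j = v j) → v' ∈ S →
    ∀ t : ℤ, t < v' i → T ≤ t → (v' i - t - 1).toNat = k →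
    Function.update v' i t ∉ S →
    ∃ s : ℤ, s + 1 ≤ v' i ∧ T ≤ s ∧ Function.update v i s ∉ S ∧
      Function.update v i (s + 1) ∈ S ∧ (∀ j, j ≠ i → Function.update v i s j = v j) := by
  have hupd : ∀ (v' : Fin d → ℤ), (∀ j, j ≠ i → v' j = v j) →
      ∀ s : ℤ, Function.update v' i s = Function.update v i s := by
    intro v' hv' s
    funext j
    by_cases hj : j = i
    · subst hj; simp
    · simp [Function.update_of_ne hj, hv' j hj]
  intro k
  induction k with
  | zero =>
    intro v' hv' hvS t h1 h2 h3 h4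
    have ht : t = v' i - 1 := by omega
    refine ⟨t, by omega, h2, ?_, ?_, ?_⟩
    · rw [← hupd v' hv']; exact h4
    · rw [← hupd v' hv']
      have : t + 1 = v' i := by omega
      rw [this]
      simpa [Function.update_eq_self] using hvS
    · intro j hj; simp [Function.update_of_ne hj]
  | succ k ih =>
    intro v' hv' hvS t h1 h2 h3 h4
    by_cases hnext : Function.update v' i (v' i - 1) ∈ S
    · have hne : ∀ j, j ≠ i → Function.update v' i (v' i - 1) j = v j := by
        intro j hj; simp [Function.update_of_ne hj, hv' j hj]
      have := ih (Function.update v' i (v' i - 1)) hne hnext t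
        (by simp [Function.update_self]; omega) h2
        (by simp [Function.update_self]; omega)
        (by rwa [Function.update_idem])
      simp only [Function.update_self] at this
      obtain ⟨s, hs1, hs⟩ := this
      exact ⟨s, by omega, hs⟩
    · refine ⟨v' i - 1, by omega, by omega, ?_, ?_, ?_⟩
      · rw [← hupd v' hv']; exact hnext
      · rw [← hupd v' hv']
        have : v' i - 1 + 1 = v' i := by omega
        rw [this]
        simpa [Function.update_eq_self] using hvS
      · intro j hj; simp [Function.update_of_ne hj]

/-- canonical boundary edge on a fiber: given `v ∈ S` in the ball and a site on
the same `i`-fiber inside the ball that is not in `S`, produce a boundary edge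
of `S` on this fiber, inside the ball. The base is in `S` iff the bad site was
above `v`. -/
lemma fiber_edge {d : ℕ} {S : Set (Fin d → ℤ)} {c : Fin d → ℤ} {r : ℤ}
    {v : Fin d → ℤ} (hv : v ∈ S) (hvb : InBall c r v) (i : Fin d) {t : ℤ}
    (htl : c i - r ≤ t) (htu : t ≤ c i + r)
    (htS : Function.update v i t ∉ S) :
    ∃ p : Fin d → ℤ, InBall c r p ∧ InBall c r (p + unitv d i) ∧
      (∀ j, j ≠ i → p j = v j) ∧
      ((p ∈ S ∧ p + unitv d i ∉ S ∧ v i ≤ p i) ∨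
       (p ∉ S ∧ p + unitv d i ∈ S ∧ p i < v i)) := by
  have hne : t ≠ v i := by
    intro h
    rw [h, Function.update_eq_self] at htS
    exact htS hv
  rcases lt_or_gt_of_ne hne with hlt | hgt
  · -- bad site below v : downward run end
    obtain ⟨s, hs1, hs2, hs3, hs4, hs5⟩ := runEnd_down (S := S) (v := v) i
      (v i - t - 1).toNat v (fun j _ => rfl) hv t hlt (le_refl t) rfl htS
    refine ⟨Function.update v i s, ?_, ?_, hs5, Or.inr ⟨hs3, ?_, ?_⟩⟩
    · intro j
      by_cases hj : j = i
      · subst hj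
        simp only [Function.update_self]
        have h1 := hvb j
        omega
      · rw [Function.update_of_ne hj]; exact hvb j
    · rw [update_add_unitv]
      intro j
      by_cases hj : j = i
      · subst hj
        simp only [Function.update_self]
        have h1 := hvb j
        omega
      · rw [Function.update_of_ne hj]; exact hvb j
    · rw [update_add_unitv]; exact hs4
    · simp only [Function.update_self]; omega
  · -- bad site above v : upward run end
    obtain ⟨s, hs1, hs2, hs3, hs4, hs5⟩ := runEnd_up (S := S) (v := v) i
      (t - v i - 1).toNat v (fun j _ => rfl) hv t hgt (le_refl t) rfl htS
    refine ⟨Function.update v i s, ?_, ?_, hs5, Or.inl ⟨hs3, ?_, ?_⟩⟩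
    · intro j
      by_cases hj : j = i
      · subst hj
        simp only [Function.update_self]
        have h1 := hvb j
        omega
      · rw [Function.update_of_ne hj]; exact hvb j
    · rw [update_add_unitv]
      intro j
      by_cases hj : j = i
      · subst hj
        simp only [Function.update_self]
        have h1 := hvb j
        omega
      · rw [Function.update_of_ne hj]; exact hvb j
    · rw [update_add_unitv]; exact hs4
    · simp only [Function.update_self]; omega

/-- hull membership: coordinatewise between `u` and `v` -/
def InHull {d : ℕ} (u v s : Fin d → ℤ) : Prop :=
  ∀ i, (u i ≤ s i ∧ s i ≤ v i) ∨ (v i ≤ s i ∧ s i ≤ u i)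

lemma inHull_left {d : ℕ} (u v : Fin d → ℤ) : InHull u v u := by
  intro i; omega

/-- crossing lemma: on the way from `u ∉ S` to `v ∈ S` there is a boundary
pair inside the hull, with an extra witness that the non-`S` endpoint either
is `u` itself or has a non-`S` neighbour in the hull. -/
lemma cross_lemma {d : ℕ} {S : Set (Fin d → ℤ)} :
    ∀ (u : Fin d → ℤ), ∀ {v : Fin d → ℤ}, u ∉ S → v ∈ S →
    ∃ hh aa, hh ∉ S ∧ aa ∈ S ∧ Adj hh aa ∧ InHull u v hh ∧ InHull u v aa ∧
      (hh = u ∨ ∃ h', Adj hh h' ∧ h' ∉ S ∧ InHull u v h') := by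
  have key : ∀ (n : ℕ) (u : Fin d → ℤ), ∀ {v : Fin d → ℤ},
      (Finset.univ.sum fun i => (v i - u i).natAbs) = n → u ∉ S → v ∈ S →
      ∃ hh aa, hh ∉ S ∧ aa ∈ S ∧ Adj hh aa ∧ InHull u v hh ∧ InHull u v aa ∧
      (hh = u ∨ ∃ h', Adj hh h' ∧ h' ∉ S ∧ InHull u v h') := by
    intro n
    induction n using Nat.strong_induction_on with
    | _ n ih =>
      intro u v hn hu hv
      have hne : u ≠ v := fun h => hu (h ▸ hv)
      have : ∃ i0, u i0 ≠ v i0 := by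
        by_contra hc
        push_neg at hc
        exact hne (funext hc)
      obtain ⟨i0, hi0⟩ := this
      set u' : Fin d → ℤ :=
        Function.update u i0 (if u i0 < v i0 then u i0 + 1 else u i0 - 1) with hu'
      have hadj : Adj u u' := by
        rw [hu']
        split_ifs with h
        · exact adj_update_up u i0
        · exact adj_update_down u i0
      have hu'hull : InHull u v u' := by
        intro i
        by_cases hi : i = i0
        · subst hi
          rw [hu']
          simp only [Function.update_self]
          split_ifs <;> omega
        · rw [hu', Function.update_of_ne hi]
          omega
      have hmeas : (Finset.univ.sum fun i => (v i - u' i).natAbs) < n := by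
        rw [← hn]
        apply Finset.sum_lt_sum
        · intro i _
          by_cases hi : i = i0
          · subst hi
            rw [hu']
            simp only [Function.update_self]
            split_ifs <;> omega
          · rw [hu', Function.update_of_ne hi]
        · refine ⟨i0, Finset.mem_univ _, ?_⟩
          rw [hu']
          simp only [Function.update_self]
          split_ifs <;> omega
      have hull_lift : ∀ s, InHull u' v s → InHull u v s := by
        intro s hs i
        have h1 := hs i
        have h2 := hu'hull i
        omega
      by_cases hu'S : u' ∈ S
      · exact ⟨u, u', hu, hu'S, hadj, inHull_left u v, hu'hull, Or.inl rfl⟩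
      · obtain ⟨hh, aa, hhh, haa, hadj2, hhull1, hhull2, hwit⟩ :=
          ih _ hmeas u' rfl hu'S hv
        refine ⟨hh, aa, hhh, haa, hadj2, hull_lift _ hhull1, hull_lift _ hhull2, ?_⟩
        rcases hwit with rfl | ⟨h', hadj3, hh', hhull3⟩
        · exact Or.inr ⟨u, hadj.symm, hu, inHull_left u v⟩
        · exact Or.inr ⟨h', hadj3, hh', hull_lift _ hhull3⟩
  intro u v hu hv
  exact key _ u rfl hu hv

lemma choose_on {α β : Type*} [Inhabited β] {P : α → β → Prop} {I : Finset α}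
    (h : ∀ p ∈ I, ∃ e, P p e) : ∃ f : α → β, ∀ p ∈ I, P p (f p) := by
  have h' : ∀ p, ∃ e, p ∈ I → P p e := by
    intro p
    by_cases hp : p ∈ I
    · obtain ⟨e, he⟩ := h p hp
      exact ⟨e, fun _ => he⟩
    · exact ⟨default, fun hc => absurd hc hp⟩
  choose f hf using h'
  exact ⟨f, fun p hp => hf p hp⟩

section Core

variable {d b : ℕ}
  (Dset : Set (Fin d → ℤ))
  (E : ((Fin d → ℤ) × Fin d) → Prop) [DecidablePred E]
  (a : Fin d → ℤ)

/-- the box edge count around `a` -/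
noncomputable def boxCount (b : ℕ) (Dset : Set (Fin d → ℤ)) (E : ((Fin d → ℤ) × Fin d) → Prop)
    [DecidablePred E] (a : Fin d → ℤ) : ℕ :=
  (((Fintype.piFinset fun i => Finset.Icc (a i - b) (a i + b)) ×ˢ
      (Finset.univ : Finset (Fin d))).filter E).card

lemma mem_box_filter {p : Fin d → ℤ} {i : Fin d}
    (hp : InBall a (b : ℤ) p) (hE : E (p, i)) :
    (p, i) ∈ ((Fintype.piFinset fun i => Finset.Icc (a i - b) (a i + b)) ×ˢ
      (Finset.univ : Finset (Fin d))).filter E := by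
  rw [Finset.mem_filter, Finset.mem_product]
  refine ⟨⟨?_, Finset.mem_univ _⟩, hE⟩
  rw [Fintype.mem_piFinset]
  intro j
  rw [Finset.mem_Icc]
  show a j - b ≤ p j ∧ p j ≤ a j + b
  have := hp j
  omega

/-- two parallel full fibers of opposite type give `2b+1` interface edges -/
lemma same_dir_count (hd : 2 ≤ d) (hb : 2 * d ≤ b)
    (hIfc : ∀ (p : Fin d → ℤ) (i : Fin d),
      ((p ∈ Dset ∧ p + unitv d i ∉ Dset) ∨ (p ∉ Dset ∧ p + unitv d i ∈ Dset)) →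
      E (p, i))
    (i1 : Fin d) (sH sD : Fin d → ℤ)
    (hsH : InBall a (b:ℤ) sH) (hsD : InBall a (b:ℤ) sD)
    (hHfull : ∀ t, a i1 - (b:ℤ) ≤ t → t ≤ a i1 + (b:ℤ) → Function.update sH i1 t ∉ Dset)
    (hDfull : ∀ t, a i1 - (b:ℤ) ≤ t → t ≤ a i1 + (b:ℤ) → Function.update sD i1 t ∈ Dset) :
    3 * d ≤ boxCount b Dset E a := by
  classical
  have hd0 : 0 < d := by omega
  have hi : Inhabited (Fin d) := ⟨⟨0, hd0⟩⟩
  set I : Finset (Fin d × ℤ) := {i1} ×ˢ Finset.Icc (a i1 - (b:ℤ)) (a i1 + (b:ℤ)) with hI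
  have hsel : ∀ p ∈ I, ∃ e : (Fin d → ℤ) × Fin d,
      e ∈ ((Fintype.piFinset fun i => Finset.Icc (a i - b) (a i + b)) ×ˢ
        (Finset.univ : Finset (Fin d))).filter E ∧ e.1 i1 = p.2 := by
    rintro ⟨i, t⟩ hp
    rw [hI, Finset.mem_product, Finset.mem_singleton, Finset.mem_Icc] at hp
    obtain ⟨hpi, hpt⟩ := hp
    have hpi' : i = i1 := hpi
    subst hpi'
    have ht1 : a i - (b:ℤ) ≤ t := hpt.1
    have ht2 : t ≤ a i + (b:ℤ) := hpt.2
    set u : Fin d → ℤ := Function.update sH i t with hu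
    set v : Fin d → ℤ := Function.update sD i t with hv
    have hui : u i = t := by rw [hu]; simp
    have hvi : v i = t := by rw [hv]; simp
    have huS : u ∉ Dset := hHfull t ht1 ht2
    have hvS : v ∈ Dset := hDfull t ht1 ht2
    obtain ⟨hh, aa, hhh, haa, hadj2, hhull1, hhull2, _⟩ := cross_lemma u huS hvS
    have hhball : InBall a (b:ℤ) hh := by
      intro j
      have h1 := hhull1 j
      by_cases hj : j = i
      · subst hj; omega
      · have h2 := hsH j
        have h3 := hsD j
        rw [hu] at h1
        rw [Function.update_of_ne hj] at h1
        have h4 : v j = sD j := by rw [hv, Function.update_of_ne hj]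
        rw [h4] at h1
        omega
    have haaball : InBall a (b:ℤ) aa := by
      intro j
      have h1 := hhull2 j
      by_cases hj : j = i
      · subst hj; omega
      · have h2 := hsH j
        have h3 := hsD j
        rw [hu] at h1
        rw [Function.update_of_ne hj] at h1
        have h4 : v j = sD j := by rw [hv, Function.update_of_ne hj]
        rw [h4] at h1
        omega
    have hhi : hh i = t := by
      have h1 := hhull1 i
      omega
    have haai : aa i = t := by
      have h1 := hhull2 i
      omega
    obtain ⟨j0, hj0 | hj0⟩ := hadj2
    · refine ⟨(hh, j0), mem_box_filter E a hhball ?_, hhi⟩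
      exact hIfc hh j0 (Or.inr ⟨hhh, by rw [← hj0]; exact haa⟩)
    · refine ⟨(aa, j0), mem_box_filter E a haaball ?_, haai⟩
      exact hIfc aa j0 (Or.inl ⟨haa, by rw [← hj0]; exact hhh⟩)
  obtain ⟨f, hf⟩ := choose_on hsel
  have hcard : I.card ≤ boxCount b Dset E a := by
    apply Finset.card_le_card_of_injOn f (fun p hp => (hf p hp).1)
    intro p hp q hq hfpq
    have h1 := (hf p hp).2
    have h2 := (hf q hq).2
    rw [hfpq] at h1
    rw [hI, Finset.mem_coe, Finset.mem_product, Finset.mem_singleton] at hp hq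
    ext
    · rw [hp.1, hq.1]
    · rw [← h1, ← h2]
  have hIcard : I.card = 2 * b + 1 := by
    rw [hI, Finset.card_product, Finset.card_singleton, one_mul, Int.card_Icc]
    have : a i1 + (b:ℤ) + 1 - (a i1 - (b:ℤ)) = 2 * b + 1 := by ring
    rw [this]
    omega
  omega

/-- Core counting lemma: around an interface pair `(h0, a)` with a non-trivial
hole component and an infinite `Dset`-side, the box of radius `b` centered at
`a` contains at least `3d` interface edges. -/
lemma core_count (hd : 2 ≤ d) (hb : 2 * d ≤ b)
    (hIfc : ∀ (p : Fin d → ℤ) (i : Fin d),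
      ((p ∈ Dset ∧ p + unitv d i ∉ Dset) ∨ (p ∉ Dset ∧ p + unitv d i ∈ Dset)) →
      E (p, i))
    (haD : a ∈ Dset)
    (h0 : Fin d → ℤ) (hh0 : h0 ∉ Dset) (hadj : Adj h0 a)
    (hplus : ∃ h', Adj h0 h' ∧ h' ∉ Dset)
    (hDfar : ∃ yfar, SChain Dset a yfar ∧ ¬ InBall a ((b : ℤ) - 1) yfar) :
    3 * d ≤ boxCount b Dset E a := by
  classical
  have hd0 : 0 < d := by omega
  have hi : Inhabited (Fin d) := ⟨⟨0, hd0⟩⟩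
  have hβ4 : 4 ≤ (b : ℤ) := by omega
  -- the exit point of Dset from the ball of radius b-1
  obtain ⟨yfar, hych, hyfar⟩ := hDfar
  have haball : InBall a ((b:ℤ) - 1) a := by intro i; omega
  obtain ⟨wD, hwDch, hwDball, i2, hi2⟩ :=
    exit_lemma (S := Dset) (c := a) (R := (b:ℤ) - 1) (by omega) hych haball hyfar
  rw [show (b:ℤ) - 1 + 1 = (b:ℤ) by ring] at hwDch hwDball hi2
  -- sign of the exit direction
  obtain ⟨σ2, hσ2, hwi2⟩ : ∃ σ2 : ℤ, (σ2 = 1 ∨ σ2 = -1) ∧ wD i2 = a i2 + σ2 * (b:ℤ) := by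
    rcases hi2 with h | h
    · exact ⟨1, Or.inl rfl, by omega⟩
    · exact ⟨-1, Or.inr rfl, by omega⟩
  -- Dset sites realizing every offset r ∈ [0, b] in direction i2
  have hvsel : ∀ r : ℤ, 0 ≤ r → r ≤ (b:ℤ) →
      ∃ v, v ∈ Dset ∧ InBall a (b:ℤ) v ∧ v i2 = a i2 + σ2 * r := by
    intro r h0r hrb
    apply chain_ivt hwDch haD (by intro i; omega) i2
    rcases hσ2 with rfl | rfl
    · left; constructor <;> omega
    · right; constructor <;> omega
  have h0ball : InBall a (b:ℤ) h0 := by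
    intro i
    have := hadj.sub_le i
    omega
  by_cases hfH : ∃ (i : Fin d) (s : Fin d → ℤ), InBall a (b:ℤ) s ∧
      (∀ t, a i - (b:ℤ) ≤ t → t ≤ a i + (b:ℤ) → Function.update s i t ∉ Dset)
  · by_cases hfD : ∃ (i : Fin d) (s : Fin d → ℤ), InBall a (b:ℤ) s ∧
        (∀ t, a i - (b:ℤ) ≤ t → t ≤ a i + (b:ℤ) → Function.update s i t ∈ Dset)
    · -- case full H and full D fibers: 2b+1 crossing edges
      obtain ⟨iH, sH, hsHb, hsHfull⟩ := hfH
      obtain ⟨iD, sD, hsDb, hsDfull⟩ := hfD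
      by_cases hii : iH = iD
      · subst hii
        exact same_dir_count Dset E a hd hb hIfc iH sH sD hsHb hsDb hsHfull hsDfull
      · by_cases hEx : ∃ t, a iH - (b:ℤ) ≤ t ∧ t ≤ a iH + (b:ℤ) ∧
            (∀ t', a iD - (b:ℤ) ≤ t' → t' ≤ a iD + (b:ℤ) →
              Function.update (Function.update sH iH t) iD t' ∉ Dset)
        · obtain ⟨t, ht1, ht2, htfull⟩ := hEx
          apply same_dir_count Dset E a hd hb hIfc iD
            (Function.update sH iH t) sD _ hsDb htfull hsDfull
          intro j
          by_cases hj : j = iH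
          · subst hj
            simp only [Function.update_self]
            omega
          · rw [Function.update_of_ne hj]
            exact hsHb j
        · push_neg at hEx
          -- every translate of the full-H fiber meets Dset in direction iD
          set I : Finset (Fin d × ℤ) :=
            {iH} ×ˢ Finset.Icc (a iH - (b:ℤ)) (a iH + (b:ℤ)) with hI
          have hsel : ∀ p ∈ I, ∃ e : (Fin d → ℤ) × Fin d,
              e ∈ ((Fintype.piFinset fun i => Finset.Icc (a i - b) (a i + b)) ×ˢ
                (Finset.univ : Finset (Fin d))).filter E ∧ e.1 iH = p.2 := by
            rintro ⟨i, t⟩ hp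
            rw [hI, Finset.mem_product, Finset.mem_singleton, Finset.mem_Icc] at hp
            obtain ⟨hpi, hpt⟩ := hp
            have hpi' : i = iH := hpi
            subst hpi'
            have ht1 : a i - (b:ℤ) ≤ t := hpt.1
            have ht2 : t ≤ a i + (b:ℤ) := hpt.2
            obtain ⟨t', ht'1, ht'2, ht'D⟩ := hEx t ht1 ht2
            set v : Fin d → ℤ := Function.update sH i t with hv
            have hvS : v ∈ Dsetᶜ := hsHfull t ht1 ht2
            have hvball : InBall a (b:ℤ) v := by
              intro j
              by_cases hj : j = i
              · subst hj; rw [hv]; simp only [Function.update_self]; omega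
              · rw [hv, Function.update_of_ne hj]; exact hsHb j
            have hbad : Function.update v iD t' ∉ (Dsetᶜ : Set (Fin d → ℤ)) := by
              simp only [Set.mem_compl_iff, not_not]
              exact not_not.mp (fun hc => hc ht'D)
            obtain ⟨p, hp1, hp2, hp3, hp4⟩ :=
              fiber_edge (S := Dsetᶜ) hvS hvball iD ht'1 ht'2 hbad
            have hvi : v i = t := by rw [hv]; simp
            have hpcoord : p i = t := by
              rw [hp3 i (fun hc => hii (hc ▸ rfl)), hvi]
            refine ⟨(p, iD), mem_box_filter E a hp1 ?_, hpcoord⟩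
            apply hIfc
            rcases hp4 with ⟨hpS, hpuS, _⟩ | ⟨hpS, hpuS, _⟩
            · exact Or.inr ⟨hpS, by simpa using hpuS⟩
            · exact Or.inl ⟨by simpa using hpS, hpuS⟩
          obtain ⟨f, hf⟩ := choose_on hsel
          have hcard : I.card ≤ boxCount b Dset E a := by
            apply Finset.card_le_card_of_injOn f (fun p hp => (hf p hp).1)
            intro p hp q hq hfpq
            have h1 := (hf p hp).2
            have h2 := (hf q hq).2
            rw [hfpq] at h1
            rw [hI, Finset.mem_coe, Finset.mem_product, Finset.mem_singleton] at hp hq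
            ext
            · rw [hp.1, hq.1]
            · rw [← h1, ← h2]
          have hIcard : I.card = 2 * b + 1 := by
            rw [hI, Finset.card_product, Finset.card_singleton, one_mul, Int.card_Icc]
            have : a iH + (b:ℤ) + 1 - (a iH - (b:ℤ)) = 2 * b + 1 := by ring
            rw [this]
            omega
          omega
    · -- case no full D fiber: count on the Dset mass
      push_neg at hfD
      set I : Finset (Fin d × ℤ) :=
        ((Finset.univ.erase i2) ×ˢ Finset.Icc (0:ℤ) (b:ℤ)) ∪
          ({i2} ×ˢ {(-1:ℤ)}) with hI
      have hsel : ∀ p ∈ I, ∃ e : (Fin d → ℤ) × Fin d,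
          e ∈ ((Fintype.piFinset fun i => Finset.Icc (a i - b) (a i + b)) ×ˢ
            (Finset.univ : Finset (Fin d))).filter E ∧ e.2 = p.1 ∧
          (p.1 ≠ i2 → e.1 i2 = a i2 + σ2 * p.2) := by
        rintro ⟨i, r⟩ hp
        rw [hI, Finset.mem_union, Finset.mem_product, Finset.mem_product,
          Finset.mem_erase, Finset.mem_Icc, Finset.mem_singleton,
          Finset.mem_singleton] at hp
        rcases hp with ⟨⟨hii2, _⟩, hr0, hrb⟩ | ⟨hii2, hrr⟩
        · -- main family on the Dset mass
          have hii2' : i ≠ i2 := hii2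
          have hr0' : (0:ℤ) ≤ r := hr0
          have hrb' : r ≤ (b:ℤ) := hrb
          obtain ⟨v, hvD, hvball, hvi2⟩ := hvsel r hr0' hrb'
          obtain ⟨t, ht1, ht2, htD⟩ := hfD i v hvball
          obtain ⟨p, hp1, hp2, hp3, hp4⟩ :=
            fiber_edge (S := Dset) hvD hvball i ht1 ht2 htD
          refine ⟨(p, i), mem_box_filter E a hp1 (hIfc p i ?_), rfl, fun _ => ?_⟩
          · rcases hp4 with ⟨h1, h2, _⟩ | ⟨h1, h2, _⟩
            · exact Or.inl ⟨h1, h2⟩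
            · exact Or.inr ⟨h1, h2⟩
          · show p i2 = a i2 + σ2 * r
            rw [hp3 i2 (fun hc => hii2' hc.symm), hvi2]
        · -- the extra fiber through a in direction i2
          have hii2' : i = i2 := hii2
          subst hii2'
          obtain ⟨t, ht1, ht2, htD⟩ := hfD i a (by intro j; omega)
          obtain ⟨p, hp1, hp2, hp3, hp4⟩ :=
            fiber_edge (S := Dset) haD (by intro j; omega) i ht1 ht2 htD
          refine ⟨(p, i), mem_box_filter E a hp1 (hIfc p i ?_), rfl, fun hc => absurd rfl hc⟩
          rcases hp4 with ⟨h1, h2, _⟩ | ⟨h1, h2, _⟩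
          · exact Or.inl ⟨h1, h2⟩
          · exact Or.inr ⟨h1, h2⟩
      obtain ⟨f, hf⟩ := choose_on hsel
      have hcard : I.card ≤ boxCount b Dset E a := by
        apply Finset.card_le_card_of_injOn f (fun p hp => (hf p hp).1)
        intro p hp q hq hfpq
        have hp2 := (hf p hp).2.1
        have hq2 := (hf q hq).2.1
        have hp3 := (hf p hp).2.2
        have hq3 := (hf q hq).2.2
        rw [hfpq] at hp2 hp3
        have hpq1 : p.1 = q.1 := by rw [← hp2, ← hq2]
        rw [Finset.mem_coe, hI, Finset.mem_union, Finset.mem_product,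
          Finset.mem_product, Finset.mem_erase, Finset.mem_Icc,
          Finset.mem_singleton, Finset.mem_singleton] at hp hq
        have hpq2 : p.2 = q.2 := by
          rcases hp with ⟨⟨hpi, _⟩, _⟩ | ⟨hpi, hpr⟩ <;>
            rcases hq with ⟨⟨hqi, _⟩, _⟩ | ⟨hqi, hqr⟩
          · have e1 := hp3 hpi
            have e2 := hq3 hqi
            rcases hσ2 with rfl | rfl <;> omega
          · exact absurd (hpq1.trans hqi) hpi
          · exact absurd (hpq1.symm.trans hpi) hqi
          · rw [hpr, hqr]
        exact Prod.ext hpq1 hpq2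
      have hIcard : I.card = (d - 1) * (b + 1) + 1 := by
        have hdisj : Disjoint ((Finset.univ.erase i2) ×ˢ Finset.Icc (0:ℤ) (b:ℤ))
            (({i2} : Finset (Fin d)) ×ˢ ({(-1:ℤ)} : Finset ℤ)) := by
          rw [Finset.disjoint_left]
          rintro ⟨i, r⟩ hmem1 hmem2
          rw [Finset.mem_product, Finset.mem_erase] at hmem1
          rw [Finset.mem_product, Finset.mem_singleton] at hmem2
          exact hmem1.1.1 hmem2.1
        rw [hI, Finset.card_union_of_disjoint hdisj, Finset.card_product,
          Finset.card_product, Finset.card_singleton, Finset.card_singleton,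
          Finset.card_erase_of_mem (Finset.mem_univ _), Finset.card_univ,
          Fintype.card_fin, Int.card_Icc]
        have h2 : ((b:ℤ) + 1 - 0).toNat = b + 1 := by omega
        rw [h2]
      rw [hIcard] at hcard
      obtain ⟨e, rfl⟩ : ∃ e, d = e + 2 := ⟨d - 2, by omega⟩
      have h1 : (e + 2 - 1) = e + 1 := by omega
      rw [h1] at hcard
      nlinarith [hcard, hb]
  · -- no full H fiber
    push_neg at hfH
    by_cases hspan : ∃ w', BChain' Dsetᶜ a (b:ℤ) h0 w' ∧ ¬ InBall a ((b:ℤ) - 1) w'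
    · -- hole component spans the ball
      obtain ⟨w', hwch, hwfar⟩ := hspan
      have hwball : InBall a (b:ℤ) w' := hwch.mem_ball h0ball
      obtain ⟨i3, σ3, hσ3, hwi3⟩ : ∃ (i3 : Fin d) (σ3 : ℤ),
          (σ3 = 1 ∨ σ3 = -1) ∧ w' i3 = a i3 + σ3 * (b:ℤ) := by
        simp only [InBall, not_forall] at hwfar
        obtain ⟨i3, hi3⟩ := hwfar
        have h1 := hwball i3
        rcases (by omega : w' i3 = a i3 + (b:ℤ) ∨ w' i3 = a i3 - (b:ℤ)) with h | h
        · exact ⟨i3, 1, Or.inl rfl, by omega⟩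
        · exact ⟨i3, -1, Or.inr rfl, by omega⟩
      have hh0c : h0 ∈ (Dsetᶜ : Set (Fin d → ℤ)) := hh0
      have qsel : ∀ r : ℤ, 1 ≤ r → r ≤ (b:ℤ) →
          ∃ qv, qv ∉ Dset ∧ InBall a (b:ℤ) qv ∧ qv i3 = a i3 + σ3 * r := by
        intro r h1r hrb
        have hadj3 := hadj.sub_le i3
        have := chain_ivt hwch hh0c h0ball i3 (a i3 + σ3 * r) ?_
        · obtain ⟨v, hv1, hv2, hv3⟩ := this
          exact ⟨v, hv1, hv2, hv3⟩
        · rcases hσ3 with rfl | rfl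
          · left; constructor <;> omega
          · right; constructor <;> omega
      obtain ⟨i4, hi43⟩ : ∃ i4 : Fin d, i4 ≠ i3 := by
        by_cases h : i3 = ⟨0, hd0⟩
        · refine ⟨⟨1, by omega⟩, ?_⟩
          rw [h]
          intro hc
          have := congrArg Fin.val hc
          simp at this
        · exact ⟨⟨0, hd0⟩, fun hc => h hc.symm⟩
      obtain ⟨q1, hq1D, hq1b, hq1i3⟩ := qsel 1 (le_refl _) (by omega)
      -- the special edge on the fiber of h0 in direction i3
      obtain ⟨estar, hestar⟩ : ∃ estar : (Fin d → ℤ) × Fin d,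
          estar ∈ ((Fintype.piFinset fun i => Finset.Icc (a i - b) (a i + b)) ×ˢ
            (Finset.univ : Finset (Fin d))).filter E ∧ estar.2 = i3 ∧
          a i4 - 1 ≤ estar.1 i4 ∧ estar.1 i4 ≤ a i4 + 1 := by
        obtain ⟨t, ht1, ht2, htD⟩ := hfH i3 h0 h0ball
        have hbad : Function.update h0 i3 t ∉ (Dsetᶜ : Set (Fin d → ℤ)) := by
          simpa using htD
        obtain ⟨p, hp1, hp2, hp3, hp4⟩ :=
          fiber_edge (S := Dsetᶜ) hh0c h0ball i3 ht1 ht2 hbad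
        have hE : E (p, i3) := by
          apply hIfc
          rcases hp4 with ⟨h1, h2, _⟩ | ⟨h1, h2, _⟩
          · exact Or.inr ⟨h1, by simpa using h2⟩
          · exact Or.inl ⟨by simpa using h1, h2⟩
        refine ⟨(p, i3), mem_box_filter E a hp1 hE, rfl, ?_, ?_⟩
        · show a i4 - 1 ≤ p i4
          rw [hp3 i4 hi43]
          have := hadj.sub_le i4
          omega
        · show p i4 ≤ a i4 + 1
          rw [hp3 i4 hi43]
          have := hadj.sub_le i4
          omega
      -- the special pair of edges from the fiber of q1 in direction i4
      obtain ⟨e1, e2, he1F, he1d, he1c, he2F, he2spec, hne12⟩ :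
          ∃ e1 e2 : (Fin d → ℤ) × Fin d,
          e1 ∈ ((Fintype.piFinset fun i => Finset.Icc (a i - b) (a i + b)) ×ˢ
            (Finset.univ : Finset (Fin d))).filter E ∧ e1.2 = i4 ∧
          e1.1 i3 = a i3 + σ3 ∧
          e2 ∈ ((Fintype.piFinset fun i => Finset.Icc (a i - b) (a i + b)) ×ˢ
            (Finset.univ : Finset (Fin d))).filter E ∧
          ((e2.2 = i4 ∧ e2.1 i3 = a i3 + σ3) ∨
            (e2.2 = i3 ∧ (e2.1 i4 = a i4 + (b:ℤ) ∨ e2.1 i4 = a i4 - (b:ℤ)))) ∧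
          e1 ≠ e2 := by
        have hi34 : i3 ≠ i4 := fun hc => hi43 hc.symm
        -- generic edge on the i3-fiber of a site s, recording the i4-coordinate
        have mk3 : ∀ s : Fin d → ℤ, s ∉ Dset → InBall a (b:ℤ) s →
            ∃ p : Fin d → ℤ, InBall a (b:ℤ) p ∧ p i4 = s i4 ∧ E (p, i3) := by
          intro s hsD hsb
          obtain ⟨t, ht1, ht2, htD⟩ := hfH i3 s hsb
          have hbad : Function.update s i3 t ∉ (Dsetᶜ : Set (Fin d → ℤ)) := by
            simpa using htD
          obtain ⟨p, hp1, hp2, hp3, hp4⟩ :=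
            fiber_edge (S := Dsetᶜ) hsD hsb i3 ht1 ht2 hbad
          refine ⟨p, hp1, hp3 i4 hi43, ?_⟩
          apply hIfc
          rcases hp4 with ⟨h1, h2, _⟩ | ⟨h1, h2, _⟩
          · exact Or.inr ⟨h1, by simpa using h2⟩
          · exact Or.inl ⟨by simpa using h1, h2⟩
        by_cases hA : ∃ t, q1 i4 < t ∧ t ≤ a i4 + (b:ℤ) ∧
            Function.update q1 i4 t ∈ Dset
        · obtain ⟨t, ht1, ht2, htD⟩ := hA
          have hbad : Function.update q1 i4 t ∉ (Dsetᶜ : Set (Fin d → ℤ)) := by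
            simpa using htD
          obtain ⟨s', hs1, hs2, hs3, hs4, hs5⟩ := runEnd_up (S := Dsetᶜ) (v := q1) i4
            (t - q1 i4 - 1).toNat q1 (fun j _ => rfl) hq1D t ht1 (le_refl t) rfl hbad
          have hp1ball : InBall a (b:ℤ) (Function.update q1 i4 s') := by
            intro j
            by_cases hj : j = i4
            · subst hj; simp only [Function.update_self]; have := hq1b j; omega
            · rw [Function.update_of_ne hj]; exact hq1b j
          have hp1E : E (Function.update q1 i4 s', i4) := by
            apply hIfc
            rw [update_add_unitv]
            exact Or.inr ⟨by simpa using hs3, by simpa using hs4⟩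
          have hp1i3 : (Function.update q1 i4 s') i3 = a i3 + σ3 := by
            rw [Function.update_of_ne hi34]
            omega
          have hp1nD : Function.update q1 i4 s' ∉ Dset := hs3
          by_cases hB : ∃ t', t' < q1 i4 ∧ a i4 - (b:ℤ) ≤ t' ∧
              Function.update q1 i4 t' ∈ Dset
          · -- both run ends inside the box on the same fiber
            obtain ⟨t', ht1', ht2', htD'⟩ := hB
            have hbad' : Function.update q1 i4 t' ∉ (Dsetᶜ : Set (Fin d → ℤ)) := by
              simpa using htD'
            obtain ⟨s'', hs1', hs2', hs3', hs4', hs5'⟩ :=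
              runEnd_down (S := Dsetᶜ) (v := q1) i4
                (q1 i4 - t' - 1).toNat q1 (fun j _ => rfl) hq1D t' ht1' (le_refl t') rfl hbad'
            have hp2ball : InBall a (b:ℤ) (Function.update q1 i4 s'') := by
              intro j
              by_cases hj : j = i4
              · subst hj; simp only [Function.update_self]; have := hq1b j; omega
              · rw [Function.update_of_ne hj]; exact hq1b j
            have hp2E : E (Function.update q1 i4 s'', i4) := by
              apply hIfc
              rw [update_add_unitv]
              refine Or.inl ⟨by simpa using hs3', by simpa using hs4'⟩
            have hp2i3 : (Function.update q1 i4 s'') i3 = a i3 + σ3 := by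
              rw [Function.update_of_ne hi34]
              omega
            have hp2D : Function.update q1 i4 s'' ∈ Dset := by simpa using hs3'
            refine ⟨(Function.update q1 i4 s', i4), (Function.update q1 i4 s'', i4),
              mem_box_filter E a hp1ball hp1E, rfl, hp1i3,
              mem_box_filter E a hp2ball hp2E, Or.inl ⟨rfl, hp2i3⟩, ?_⟩
            intro hc
            have : Function.update q1 i4 s' = Function.update q1 i4 s'' :=
              congrArg Prod.fst hc
            rw [this] at hp1nD
            exact hp1nD hp2D
          · -- the fiber of q1 reaches the bottom of the box inside Dsetᶜ
            push_neg at hB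
            have hbot : Function.update q1 i4 (a i4 - (b:ℤ)) ∉ Dset := by
              rcases eq_or_lt_of_le ((hq1b i4).1) with he | hl
              · rw [he, Function.update_eq_self]
                exact hq1D
              · exact hB _ hl (le_refl _)
            have hbotball : InBall a (b:ℤ) (Function.update q1 i4 (a i4 - (b:ℤ))) := by
              intro j
              by_cases hj : j = i4
              · subst hj; simp only [Function.update_self]; omega
              · rw [Function.update_of_ne hj]; exact hq1b j
            obtain ⟨p2, hp21, hp22, hp23⟩ := mk3 _ hbot hbotball
            rw [Function.update_self] at hp22
            refine ⟨(Function.update q1 i4 s', i4), (p2, i3),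
              mem_box_filter E a hp1ball hp1E, rfl, hp1i3,
              mem_box_filter E a hp21 hp23, Or.inr ⟨rfl, Or.inr hp22⟩, ?_⟩
            intro hc
            exact hi43 (congrArg Prod.snd hc)
        · -- the fiber of q1 reaches the top of the box inside Dsetᶜ
          push_neg at hA
          obtain ⟨t, ht1, ht2, htD⟩ := hfH i4 q1 hq1b
          have htlt : t < q1 i4 := by
            rcases lt_trichotomy t (q1 i4) with h | h | h
            · exact h
            · exfalso
              rw [h, Function.update_eq_self] at htD
              exact hq1D htD
            · exact absurd htD (hA t h ht2)
          have hbad : Function.update q1 i4 t ∉ (Dsetᶜ : Set (Fin d → ℤ)) := by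
            simpa using htD
          obtain ⟨s'', hs1', hs2', hs3', hs4', hs5'⟩ :=
            runEnd_down (S := Dsetᶜ) (v := q1) i4
              (q1 i4 - t - 1).toNat q1 (fun j _ => rfl) hq1D t htlt ht1 rfl hbad
          have hp1ball : InBall a (b:ℤ) (Function.update q1 i4 s'') := by
            intro j
            by_cases hj : j = i4
            · subst hj; simp only [Function.update_self]; have := hq1b j; omega
            · rw [Function.update_of_ne hj]; exact hq1b j
          have hp1E : E (Function.update q1 i4 s'', i4) := by
            apply hIfc
            rw [update_add_unitv]
            exact Or.inl ⟨by simpa using hs3', by simpa using hs4'⟩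
          have hp1i3 : (Function.update q1 i4 s'') i3 = a i3 + σ3 := by
            rw [Function.update_of_ne hi34]
            omega
          have htop : Function.update q1 i4 (a i4 + (b:ℤ)) ∉ Dset := by
            rcases eq_or_lt_of_le ((hq1b i4).2) with he | hl
            · rw [← he, Function.update_eq_self]
              exact hq1D
            · exact hA _ hl (le_refl _)
          have htopball : InBall a (b:ℤ) (Function.update q1 i4 (a i4 + (b:ℤ))) := by
            intro j
            by_cases hj : j = i4
            · subst hj; simp only [Function.update_self]; omega
            · rw [Function.update_of_ne hj]; exact hq1b j
          obtain ⟨p2, hp21, hp22, hp23⟩ := mk3 _ htop htopball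
          rw [Function.update_self] at hp22
          refine ⟨(Function.update q1 i4 s'', i4), (p2, i3),
            mem_box_filter E a hp1ball hp1E, rfl, hp1i3,
            mem_box_filter E a hp21 hp23, Or.inr ⟨rfl, Or.inl hp22⟩, ?_⟩
          intro hc
          exact hi43 (congrArg Prod.snd hc)
      -- assemble the family of (d-1)b + 2 edges
      set I : Finset (Fin d × ℤ) :=
        (((Finset.univ.erase i3) ×ˢ Finset.Icc (1:ℤ) (b:ℤ)).erase (i4, 1)) ∪
          ({i3} ×ˢ Finset.Icc (0:ℤ) 2) with hI
      have hsel : ∀ p ∈ I, ∃ e : (Fin d → ℤ) × Fin d,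
          e ∈ ((Fintype.piFinset fun i => Finset.Icc (a i - b) (a i + b)) ×ˢ
            (Finset.univ : Finset (Fin d))).filter E ∧
          (p.1 ≠ i3 → e.2 = p.1 ∧ e.1 i3 = a i3 + σ3 * p.2) ∧
          (p.1 = i3 → ((p.2 = 0 → e = estar) ∧ (p.2 = 1 → e = e1) ∧
            (p.2 = 2 → e = e2))) := by
        rintro ⟨i, k⟩ hp
        rw [hI, Finset.mem_union, Finset.mem_erase, Finset.mem_product,
          Finset.mem_product, Finset.mem_erase, Finset.mem_Icc,
          Finset.mem_Icc, Finset.mem_singleton] at hp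
        rcases hp with ⟨hne41, ⟨hii3, _⟩, hk1, hkb⟩ | ⟨hii3, hk0, hk2⟩
        · have hii3' : i ≠ i3 := hii3
          have hk1' : (1:ℤ) ≤ k := hk1
          have hkb' : k ≤ (b:ℤ) := hkb
          obtain ⟨qv, hqD, hqb, hqi3⟩ := qsel k hk1' hkb'
          obtain ⟨t, ht1, ht2, htD⟩ := hfH i qv hqb
          have hbad : Function.update qv i t ∉ (Dsetᶜ : Set (Fin d → ℤ)) := by
            simpa using htD
          obtain ⟨p, hp1, hp2, hp3, hp4⟩ :=
            fiber_edge (S := Dsetᶜ) hqD hqb i ht1 ht2 hbad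
          have hE : E (p, i) := by
            apply hIfc
            rcases hp4 with ⟨h1, h2, _⟩ | ⟨h1, h2, _⟩
            · exact Or.inr ⟨h1, by simpa using h2⟩
            · exact Or.inl ⟨by simpa using h1, h2⟩
          refine ⟨(p, i), mem_box_filter E a hp1 hE, fun _ => ⟨rfl, ?_⟩,
            fun hc => absurd hc hii3'⟩
          show p i3 = a i3 + σ3 * k
          rw [hp3 i3 (fun hc => hii3' hc.symm), hqi3]
        · have hii3' : i = i3 := hii3
          have hk0' : (0:ℤ) ≤ k := hk0
          have hk2' : k ≤ 2 := hk2
          interval_cases k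
          · exact ⟨estar, hestar.1, fun hc => absurd hii3' hc,
              fun _ => ⟨fun _ => rfl, fun hc => by omega, fun hc => by omega⟩⟩
          · exact ⟨e1, he1F, fun hc => absurd hii3' hc,
              fun _ => ⟨fun hc => by omega, fun _ => rfl, fun hc => by omega⟩⟩
          · exact ⟨e2, he2F, fun hc => absurd hii3' hc,
              fun _ => ⟨fun hc => by omega, fun hc => by omega, fun _ => rfl⟩⟩
      obtain ⟨f, hf⟩ := choose_on hsel
      have hb1 : (1:ℤ) ≤ (b:ℤ) := by omega
      have memI : ∀ p : Fin d × ℤ, p ∈ I →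
          (p.1 ≠ i3 → (p ≠ (i4, 1) ∧ 1 ≤ p.2 ∧ p.2 ≤ (b:ℤ))) ∧
          (p.1 = i3 → (0 ≤ p.2 ∧ p.2 ≤ 2)) := by
        intro p hp
        rw [hI, Finset.mem_union, Finset.mem_erase, Finset.mem_product,
          Finset.mem_product, Finset.mem_erase, Finset.mem_Icc,
          Finset.mem_Icc, Finset.mem_singleton] at hp
        rcases hp with ⟨hne41, ⟨hii3, _⟩, hk1, hkb⟩ | ⟨hii3, hk0, hk2⟩
        · exact ⟨fun _ => ⟨hne41, hk1, hkb⟩, fun hc => absurd hc hii3⟩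
        · exact ⟨fun hc => absurd hii3 hc, fun _ => ⟨hk0, hk2⟩⟩
      -- the three special edges are pairwise distinct
      have hstar1 : estar ≠ e1 := by
        intro hc
        have := hestar.2.1
        rw [hc, he1d] at this
        exact hi43 this
      have hstar2 : estar ≠ e2 := by
        intro hc
        rcases he2spec with ⟨hd2, _⟩ | ⟨hd2, hc2⟩
        · have := hestar.2.1
          rw [hc, hd2] at this
          exact hi43 this
        · have h1 := hestar.2.2.1
          have h2 := hestar.2.2.2
          rw [hc] at h1 h2
          rcases hc2 with h | h <;> omega
      have hinj : ∀ p ∈ I, ∀ q ∈ I, f p = f q → p = q := by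
        intro p hp q hq hfpq
        obtain ⟨hpF, hpfam, hpspc⟩ := hf p hp
        obtain ⟨hqF, hqfam, hqspc⟩ := hf q hq
        have hpI := memI p hp
        have hqI := memI q hq
        -- helper : family slot vs special slot is impossible
        have key : ∀ pp qq : Fin d × ℤ, f pp = f qq →
            (pp.1 ≠ i3 → (f pp).2 = pp.1 ∧ (f pp).1 i3 = a i3 + σ3 * pp.2) →
            (qq.1 = i3 → ((qq.2 = 0 → f qq = estar) ∧ (qq.2 = 1 → f qq = e1) ∧
              (qq.2 = 2 → f qq = e2))) →
            (pp ≠ (i4, 1) ∧ 1 ≤ pp.2 ∧ pp.2 ≤ (b:ℤ)) → (0 ≤ qq.2 ∧ qq.2 ≤ 2) →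
            pp.1 ≠ i3 → qq.1 = i3 → False := by
          intro pp qq hfe hfam hspc hppI hqqI hpp3 hqq3
          obtain ⟨hd1, hc1⟩ := hfam hpp3
          obtain ⟨hs0, hs1, hs2⟩ := hspc hqq3
          have hqq2 : qq.2 = 0 ∨ qq.2 = 1 ∨ qq.2 = 2 := by omega
          rcases hqq2 with h | h | h
          · have he := hs0 h
            rw [← hfe] at he
            have := hestar.2.1
            rw [← he] at this
            exact hpp3 (hd1 ▸ this)
          · have he := hs1 h
            rw [← hfe] at he
            have hdd := he1d
            rw [← he] at hdd
            have hcc := he1c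
            rw [← he] at hcc
            have hpp1 : pp.1 = i4 := by rw [← hd1, hdd]
            have hpp2 : pp.2 = 1 := by
              rw [hc1] at hcc
              rcases hσ3 with rfl | rfl <;> omega
            exact hppI.1 (Prod.ext hpp1 hpp2)
          · have he := hs2 h
            rw [← hfe] at he
            rcases he2spec with ⟨hd2, hc2⟩ | ⟨hd2, hc2⟩
            · have hdd : (f pp).2 = i4 := by rw [he, hd2]
              have hcc : (f pp).1 i3 = a i3 + σ3 := by rw [he, hc2]
              have hpp1 : pp.1 = i4 := by rw [← hd1, hdd]
              have hpp2 : pp.2 = 1 := by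
                rw [hc1] at hcc
                rcases hσ3 with rfl | rfl <;> omega
              exact hppI.1 (Prod.ext hpp1 hpp2)
            · have hdd : (f pp).2 = i3 := by rw [he, hd2]
              exact hpp3 (by rw [← hd1, hdd])
        by_cases hp3 : p.1 = i3 <;> by_cases hq3 : q.1 = i3
        · -- both special
          have hpq1 : p.1 = q.1 := by rw [hp3, hq3]
          obtain ⟨hpk0, hpk2⟩ := hpI.2 hp3
          obtain ⟨hqk0, hqk2⟩ := hqI.2 hq3
          obtain ⟨hs0, hs1, hs2⟩ := hpspc hp3
          obtain ⟨ht0, ht1, ht2⟩ := hqspc hq3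
          have hpq2 : p.2 = q.2 := by
            have hp2c : p.2 = 0 ∨ p.2 = 1 ∨ p.2 = 2 := by omega
            have hq2c : q.2 = 0 ∨ q.2 = 1 ∨ q.2 = 2 := by omega
            rcases hp2c with h | h | h <;> rcases hq2c with h' | h' | h' <;>
              try omega
            · exact absurd ((hs0 h).symm.trans (hfpq.trans (ht1 h'))) hstar1
            · exact absurd ((hs0 h).symm.trans (hfpq.trans (ht2 h'))) hstar2
            · exact absurd ((ht0 h').symm.trans (hfpq.symm.trans (hs1 h))) hstar1
            · exact absurd ((hs1 h).symm.trans (hfpq.trans (ht2 h'))) hne12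
            · exact absurd ((ht0 h').symm.trans (hfpq.symm.trans (hs2 h))) hstar2
            · exact absurd ((ht1 h').symm.trans (hfpq.symm.trans (hs2 h))) hne12
          exact Prod.ext hpq1 hpq2
        · exact (key q p hfpq.symm hqfam hpspc
            (hqI.1 hq3) (hpI.2 hp3) hq3 hp3).elim
        · exact (key p q hfpq hpfam hqspc
            (hpI.1 hp3) (hqI.2 hq3) hp3 hq3).elim
        · -- both family
          obtain ⟨hd1, hc1⟩ := hpfam hp3
          obtain ⟨hd2, hc2⟩ := hqfam hq3
          have hpq1 : p.1 = q.1 := by rw [← hd1, hfpq, hd2]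
          have hpq2 : p.2 = q.2 := by
            rw [hfpq] at hc1
            rw [hc1] at hc2
            rcases hσ3 with rfl | rfl <;> omega
          exact Prod.ext hpq1 hpq2
      have hcard : I.card ≤ boxCount b Dset E a := by
        apply Finset.card_le_card_of_injOn f (fun p hp => (hf p hp).1)
        intro p hp q hq hfpq
        exact hinj p hp q hq hfpq
      have hIcard : I.card = ((d - 1) * b - 1) + 3 := by
        have hmem41 : (i4, (1:ℤ)) ∈ (Finset.univ.erase i3) ×ˢ Finset.Icc (1:ℤ) (b:ℤ) := by
          rw [Finset.mem_product, Finset.mem_erase, Finset.mem_Icc]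
          exact ⟨⟨hi43, Finset.mem_univ _⟩, le_refl _, hb1⟩
        have hdisj : Disjoint
            (((Finset.univ.erase i3) ×ˢ Finset.Icc (1:ℤ) (b:ℤ)).erase (i4, 1))
            (({i3} : Finset (Fin d)) ×ˢ Finset.Icc (0:ℤ) 2) := by
          rw [Finset.disjoint_left]
          rintro ⟨i, r⟩ hmem1 hmem2
          rw [Finset.mem_erase, Finset.mem_product, Finset.mem_erase] at hmem1
          rw [Finset.mem_product, Finset.mem_singleton] at hmem2
          exact hmem1.2.1.1 hmem2.1
        rw [hI, Finset.card_union_of_disjoint hdisj,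
          Finset.card_erase_of_mem hmem41, Finset.card_product,
          Finset.card_product, Finset.card_singleton,
          Finset.card_erase_of_mem (Finset.mem_univ _), Finset.card_univ,
          Fintype.card_fin, Int.card_Icc, Int.card_Icc]
        have h2 : ((b:ℤ) + 1 - 1).toNat = b := by omega
        rw [h2]
        omega
      rw [hIcard] at hcard
      obtain ⟨e, rfl⟩ : ∃ e, d = e + 2 := ⟨d - 2, by omega⟩
      have h1 : (e + 2 - 1) = e + 1 := by omega
      rw [h1] at hcard
      have h6 : 3 * (e + 2) ≤ (e + 1) * b + 2 := by nlinarith [hb]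
      have h7 : 1 ≤ (e + 1) * b := by nlinarith [hb]
      omega
    · -- hole component confined: 4d-2 edges around h0 and its H-neighbour
      push_neg at hspan
      obtain ⟨hq, hadjq, hhq⟩ := hplus
      have hqball : InBall a (b:ℤ) hq := by
        intro i
        have h1 := hadjq.sub_le i
        have h2 := hadj.sub_le i
        omega
      obtain ⟨j0, hj0⟩ := hadjq
      have hqj0 : hq j0 ≠ h0 j0 := by
        rcases hj0 with h | h <;> rw [h] <;> simp [Pi.add_apply, unitv]
      have hqj : ∀ j, j ≠ j0 → hq j = h0 j := by
        intro j hj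
        rcases hj0 with h | h <;> rw [h] <;>
          simp [Pi.add_apply, unitv_ne _ hj]
      have hReach_h0 : BChain' Dsetᶜ a (b:ℤ) h0 h0 := Relation.ReflTransGen.refl
      have hReach_hq : BChain' Dsetᶜ a (b:ℤ) h0 hq :=
        Relation.ReflTransGen.single ⟨⟨j0, hj0⟩, hhq, hqball⟩
      -- upward boundary edge on the fiber of s in direction i
      have mkup : ∀ (s : Fin d → ℤ), s ∉ Dset → InBall a (b:ℤ) s →
          BChain' Dsetᶜ a (b:ℤ) h0 s → ∀ i : Fin d,
          ∃ p : Fin d → ℤ, InBall a (b:ℤ) p ∧ (∀ j, j ≠ i → p j = s j) ∧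
            p ∉ Dset ∧ E (p, i) := by
        intro s hsD hsb hsR i
        have hup : ∃ t, s i < t ∧ t ≤ a i + (b:ℤ) ∧ Function.update s i t ∈ Dset := by
          by_contra hc
          push_neg at hc
          obtain ⟨k, hk⟩ : ∃ k : ℕ, s i + (k:ℤ) = a i + b :=
            ⟨(a i + b - s i).toNat, by have := hsb i; omega⟩
          have hchain := seg_chain_up (S := Dsetᶜ) s i hsb k
            (fun t h1 h2 => hc t h1 (by omega)) (by omega)
          have hreach := hsR.trans hchain
          have h2 := (hspan _ hreach) i
          simp only [Function.update_self] at h2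
          omega
        obtain ⟨t, ht1, ht2, htD⟩ := hup
        have hbad : Function.update s i t ∉ (Dsetᶜ : Set (Fin d → ℤ)) := by
          simpa using htD
        obtain ⟨s', hs1, hs2, hs3, hs4, hs5⟩ := runEnd_up (S := Dsetᶜ) (v := s) i
          (t - s i - 1).toNat s (fun j _ => rfl) hsD t ht1 (le_refl t) rfl hbad
        refine ⟨Function.update s i s', ?_, ?_, hs3, ?_⟩
        · intro j
          by_cases hj : j = i
          · subst hj
            simp only [Function.update_self]
            have := hsb j
            omega
          · rw [Function.update_of_ne hj]; exact hsb j
        · intro j hj; rw [Function.update_of_ne hj]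
        · apply hIfc
          rw [update_add_unitv]
          refine Or.inr ⟨hs3, ?_⟩
          simpa using hs4
      -- downward boundary edge, with base in Dset
      have mkdown : ∀ (s : Fin d → ℤ), s ∉ Dset → InBall a (b:ℤ) s →
          BChain' Dsetᶜ a (b:ℤ) h0 s → ∀ i : Fin d,
          ∃ p : Fin d → ℤ, InBall a (b:ℤ) p ∧ (∀ j, j ≠ i → p j = s j) ∧
            p ∈ Dset ∧ E (p, i) := by
        intro s hsD hsb hsR i
        have hdown : ∃ t, t < s i ∧ a i - (b:ℤ) ≤ t ∧ Function.update s i t ∈ Dset := by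
          by_contra hc
          push_neg at hc
          obtain ⟨k, hk⟩ : ∃ k : ℕ, s i - (k:ℤ) = a i - b :=
            ⟨(s i - (a i - b)).toNat, by have := hsb i; omega⟩
          have hchain := seg_chain_down (S := Dsetᶜ) s i hsb k
            (fun t h1 h2 => hc t h2 (by omega)) (by omega)
          have hreach := hsR.trans hchain
          have h2 := (hspan _ hreach) i
          simp only [Function.update_self] at h2
          omega
        obtain ⟨t, ht1, ht2, htD⟩ := hdown
        have hbad : Function.update s i t ∉ (Dsetᶜ : Set (Fin d → ℤ)) := by
          simpa using htD
        obtain ⟨s', hs1, hs2, hs3, hs4, hs5⟩ := runEnd_down (S := Dsetᶜ) (v := s) i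
          (s i - t - 1).toNat s (fun j _ => rfl) hsD t ht1 (le_refl t) rfl hbad
        refine ⟨Function.update s i s', ?_, ?_, by simpa using hs3, ?_⟩
        · intro j
          by_cases hj : j = i
          · subst hj
            simp only [Function.update_self]
            have := hsb j
            omega
          · rw [Function.update_of_ne hj]; exact hsb j
        · intro j hj; rw [Function.update_of_ne hj]
        · apply hIfc
          rw [update_add_unitv]
          refine Or.inl ⟨by simpa using hs3, ?_⟩
          simpa using hs4
      set I : Finset (Fin d × ℤ) :=
        ((Finset.univ.erase j0) ×ˢ Finset.Icc (0:ℤ) 3) ∪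
          ({j0} ×ˢ Finset.Icc (0:ℤ) 1) with hI
      have hsel : ∀ p ∈ I, ∃ e : (Fin d → ℤ) × Fin d,
          e ∈ ((Fintype.piFinset fun i => Finset.Icc (a i - b) (a i + b)) ×ˢ
            (Finset.univ : Finset (Fin d))).filter E ∧ e.2 = p.1 ∧
          (p.1 ≠ j0 → e.1 j0 = (if p.2 ≤ 1 then h0 else hq) j0) ∧
          (e.1 ∈ Dset ↔ (p.2 = 1 ∨ p.2 = 3)) := by
        rintro ⟨i, k⟩ hp
        have hk : (0:ℤ) ≤ k ∧ k ≤ 3 := by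
          rw [hI, Finset.mem_union, Finset.mem_product, Finset.mem_product,
            Finset.mem_Icc, Finset.mem_Icc] at hp
          rcases hp with ⟨_, h⟩ | ⟨_, h⟩ <;> exact ⟨h.1, by omega⟩
        obtain ⟨hk0, hk3⟩ := hk
        interval_cases k
        · obtain ⟨p, hp1, hp2, hp3, hp4⟩ := mkup h0 hh0 h0ball hReach_h0 i
          refine ⟨(p, i), mem_box_filter E a hp1 hp4, rfl, fun hij => ?_, ?_⟩
          · simp only [if_pos (by norm_num : (0:ℤ) ≤ 1)]
            exact hp2 j0 (fun hc => hij (hc ▸ rfl))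
          · constructor
            · intro h; exact absurd h hp3
            · intro h; rcases h with h | h <;> norm_num at h
        · obtain ⟨p, hp1, hp2, hp3, hp4⟩ := mkdown h0 hh0 h0ball hReach_h0 i
          refine ⟨(p, i), mem_box_filter E a hp1 hp4, rfl, fun hij => ?_, ?_⟩
          · simp only [if_pos (by norm_num : (1:ℤ) ≤ 1)]
            exact hp2 j0 (fun hc => hij (hc ▸ rfl))
          · exact ⟨fun _ => Or.inl rfl, fun _ => hp3⟩
        · obtain ⟨p, hp1, hp2, hp3, hp4⟩ := mkup hq hhq hqball hReach_hq i
          refine ⟨(p, i), mem_box_filter E a hp1 hp4, rfl, fun hij => ?_, ?_⟩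
          · simp only [if_neg (by norm_num : ¬ (2:ℤ) ≤ 1)]
            exact hp2 j0 (fun hc => hij (hc ▸ rfl))
          · constructor
            · intro h; exact absurd h hp3
            · intro h; rcases h with h | h <;> norm_num at h
        · obtain ⟨p, hp1, hp2, hp3, hp4⟩ := mkdown hq hhq hqball hReach_hq i
          refine ⟨(p, i), mem_box_filter E a hp1 hp4, rfl, fun hij => ?_, ?_⟩
          · simp only [if_neg (by norm_num : ¬ (3:ℤ) ≤ 1)]
            exact hp2 j0 (fun hc => hij (hc ▸ rfl))
          · exact ⟨fun _ => Or.inr rfl, fun _ => hp3⟩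
      obtain ⟨f, hf⟩ := choose_on hsel
      have hcard : I.card ≤ boxCount b Dset E a := by
        apply Finset.card_le_card_of_injOn f (fun p hp => (hf p hp).1)
        intro p hp q hq' hfpq
        obtain ⟨_, hp2, hp3, hp4⟩ := hf p hp
        obtain ⟨_, hq2, hq3, hq4⟩ := hf q hq'
        rw [hfpq] at hp2 hp3 hp4
        have hpq1 : p.1 = q.1 := by rw [← hp2, ← hq2]
        have hkb1 : (0:ℤ) ≤ p.2 ∧ p.2 ≤ 3 ∧ (p.1 = j0 → p.2 ≤ 1) := by
          rw [Finset.mem_coe, hI, Finset.mem_union, Finset.mem_product,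
            Finset.mem_product, Finset.mem_erase, Finset.mem_Icc,
            Finset.mem_Icc, Finset.mem_singleton] at hp
          rcases hp with ⟨⟨h1, _⟩, h2, h3⟩ | ⟨h1, h2, h3⟩
          · exact ⟨h2, h3, fun hc => absurd hc h1⟩
          · exact ⟨h2, by omega, fun _ => h3⟩
        have hkb2 : (0:ℤ) ≤ q.2 ∧ q.2 ≤ 3 ∧ (q.1 = j0 → q.2 ≤ 1) := by
          rw [Finset.mem_coe, hI, Finset.mem_union, Finset.mem_product,
            Finset.mem_product, Finset.mem_erase, Finset.mem_Icc,
            Finset.mem_Icc, Finset.mem_singleton] at hq'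
          rcases hq' with ⟨⟨h1, _⟩, h2, h3⟩ | ⟨h1, h2, h3⟩
          · exact ⟨h2, h3, fun hc => absurd hc h1⟩
          · exact ⟨h2, by omega, fun _ => h3⟩
        have hmemiff : (p.2 = 1 ∨ p.2 = 3) ↔ (q.2 = 1 ∨ q.2 = 3) := by
          rw [← hp4, ← hq4]
        have hpq2 : p.2 = q.2 := by
          by_cases hj : p.1 = j0
          · have b1 := hkb1.2.2 hj
            have b2 := hkb2.2.2 (by rw [← hpq1]; exact hj)
            rcases hmemiff with ⟨hm1, hm2⟩
            by_cases hm : p.2 = 1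
            · have := hm1 (Or.inl hm); omega
            · have : ¬ (q.2 = 1 ∨ q.2 = 3) := by
                intro hc
                have := hm2 hc
                omega
              omega
          · have e1 := hp3 hj
            have e2 := hq3 (by rw [← hpq1]; exact hj)
            rw [e1] at e2
            have hsame : (p.2 ≤ 1) = (q.2 ≤ 1) := by
              by_cases hc1 : p.2 ≤ 1 <;> by_cases hc2 : q.2 ≤ 1
              · simp [hc1, hc2]
              · rw [if_pos hc1, if_neg hc2] at e2
                exact absurd e2.symm hqj0
              · rw [if_neg hc1, if_pos hc2] at e2
                exact absurd e2 hqj0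
              · simp [hc1, hc2]
            rcases hmemiff with ⟨hm1, hm2⟩
            by_cases hc1 : p.2 ≤ 1
            · have hc2 : q.2 ≤ 1 := by rw [← hsame]; exact hc1
              by_cases hm : p.2 = 1
              · have := hm1 (Or.inl hm); omega
              · have : ¬ (q.2 = 1 ∨ q.2 = 3) := by
                  intro hc
                  have := hm2 hc
                  omega
                omega
            · have hc2 : ¬ q.2 ≤ 1 := by rw [← hsame]; exact hc1
              by_cases hm : p.2 = 3
              · have := hm1 (Or.inr hm)
                have h1 := hkb1.1
                have h2 := hkb2.1
                omega
              · have : ¬ (q.2 = 1 ∨ q.2 = 3) := by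
                  intro hc
                  have := hm2 hc
                  have h1 := hkb1.1
                  have h2 := hkb1.2.1
                  omega
                have h1 := hkb1.1
                have h2 := hkb2.2.1
                omega
        exact Prod.ext hpq1 hpq2
      have hIcard : I.card = (d - 1) * 4 + 2 := by
        have hdisj : Disjoint ((Finset.univ.erase j0) ×ˢ Finset.Icc (0:ℤ) 3)
            (({j0} : Finset (Fin d)) ×ˢ Finset.Icc (0:ℤ) 1) := by
          rw [Finset.disjoint_left]
          rintro ⟨i, r⟩ hmem1 hmem2
          rw [Finset.mem_product, Finset.mem_erase] at hmem1
          rw [Finset.mem_product, Finset.mem_singleton] at hmem2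
          exact hmem1.1.1 hmem2.1
        rw [hI, Finset.card_union_of_disjoint hdisj, Finset.card_product,
          Finset.card_product, Finset.card_singleton,
          Finset.card_erase_of_mem (Finset.mem_univ _), Finset.card_univ,
          Fintype.card_fin, Int.card_Icc, Int.card_Icc]
        rfl
      rw [hIcard] at hcard
      omega

end Core

/-- two isolated holes within distance `2b` give `3d` interface edges in a box -/
lemma star_count {d b : ℕ} (Dset : Set (Fin d → ℤ))
    (E : ((Fin d → ℤ) × Fin d) → Prop) [DecidablePred E]
    (hd : 2 ≤ d) (hb : 2 * d ≤ b)
    (hIfc : ∀ (p : Fin d → ℤ) (i : Fin d),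
      ((p ∈ Dset ∧ p + unitv d i ∉ Dset) ∨ (p ∉ Dset ∧ p + unitv d i ∈ Dset)) →
      E (p, i))
    (x y : Fin d → ℤ) (hxy : x ≠ y)
    (hdist : ∀ i, x i - 2 * b ≤ y i ∧ y i ≤ x i + 2 * b)
    (hxD : x ∉ Dset) (hyD : y ∉ Dset)
    (hxN : ∀ p, Adj x p → p ∈ Dset) (hyN : ∀ p, Adj y p → p ∈ Dset) :
    3 * d ≤ boxCount b Dset E (fun i => max (x i) (y i) - b) := by
  classical
  have hd0 : 0 < d := by omega
  have hi : Inhabited (Fin d) := ⟨⟨0, hd0⟩⟩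
  have hβ4 : 4 ≤ (b : ℤ) := by omega
  set z : Fin d → ℤ := fun i => max (x i) (y i) - b with hz
  have hxball : InBall z (b:ℤ) x := by
    intro i
    have := hdist i
    rw [hz]
    simp only []
    rcases max_cases (x i) (y i) with ⟨hm, _⟩ | ⟨hm, _⟩ <;> rw [hm] <;> omega
  have hyball : InBall z (b:ℤ) y := by
    intro i
    have := hdist i
    rw [hz]
    simp only []
    rcases max_cases (x i) (y i) with ⟨hm, _⟩ | ⟨hm, _⟩ <;> rw [hm] <;> omega
  have upd_sub : ∀ (s : Fin d → ℤ) (i : Fin d),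
      Function.update s i (s i - 1) + unitv d i = s := by
    intro s i
    funext j
    by_cases hj : j = i
    · subst hj; simp [Function.update_self, unitv]
    · simp [Function.update_of_ne hj, unitv_ne _ hj]
  have adj_down : ∀ (s : Fin d → ℤ) (i : Fin d), Adj s (Function.update s i (s i - 1)) :=
    fun s i => adj_update_down s i
  set I : Finset (Fin d × ℤ) := Finset.univ ×ˢ Finset.Icc (0:ℤ) 2 with hI
  have hsel : ∀ p ∈ I, ∃ e : (Fin d → ℤ) × Fin d,
      e ∈ ((Fintype.piFinset fun i => Finset.Icc (z i - b) (z i + b)) ×ˢ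
        (Finset.univ : Finset (Fin d))).filter E ∧ e.2 = p.1 ∧
      (p.2 = 0 → e.1 = x) ∧ (p.2 = 1 → e.1 = y) ∧ (p.2 = 2 → e.1 ∈ Dset) := by
    rintro ⟨i, k⟩ hp
    rw [hI, Finset.mem_product, Finset.mem_Icc] at hp
    have hk0 : (0:ℤ) ≤ k := hp.2.1
    have hk2 : k ≤ 2 := hp.2.2
    interval_cases k
    · -- upward edge at x
      have hxup : x + unitv d i ∈ Dset := hxN _ ⟨i, Or.inl rfl⟩
      have hE : E (x, i) := hIfc x i (Or.inr ⟨hxD, hxup⟩)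
      exact ⟨(x, i), mem_box_filter E z hxball hE, rfl,
        fun _ => rfl, fun hc => by omega, fun hc => by omega⟩
    · -- upward edge at y
      have hyup : y + unitv d i ∈ Dset := hyN _ ⟨i, Or.inl rfl⟩
      have hE : E (y, i) := hIfc y i (Or.inr ⟨hyD, hyup⟩)
      exact ⟨(y, i), mem_box_filter E z hyball hE, rfl,
        fun hc => by omega, fun _ => rfl, fun hc => by omega⟩
    · -- downward edge at x or y
      by_cases hcase : y i - x i = 2 * b
      · have hmem : y - unitv d i ∈ Dset := by
          apply hyN
          refine ⟨i, Or.inr ?_⟩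
          funext j
          by_cases hj : j = i <;> simp [Pi.add_apply, Pi.sub_apply, unitv, hj]
        have hyd : y - unitv d i = Function.update y i (y i - 1) := by
          funext j
          by_cases hj : j = i
          · subst hj; simp [Function.update_self, Pi.sub_apply, unitv]
          · simp [Function.update_of_ne hj, Pi.sub_apply, unitv_ne _ hj]
        have hE : E (Function.update y i (y i - 1), i) := by
          apply hIfc
          rw [upd_sub]
          exact Or.inl ⟨by rw [← hyd]; exact hmem, hyD⟩
        refine ⟨(Function.update y i (y i - 1), i),
          mem_box_filter E z ?_ hE, rfl,
          fun hc => by omega, fun hc => by omega, fun _ => by rw [← hyd]; exact hmem⟩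
        intro j
        by_cases hj : j = i
        · subst hj
          simp only [Function.update_self]
          have h1 := hyball j
          have h2 := hdist j
          rw [hz] at h1 ⊢
          simp only [] at h1 ⊢
          rcases max_cases (x j) (y j) with ⟨hm, _⟩ | ⟨hm, _⟩ <;> rw [hm] at h1 ⊢ <;> omega
        · rw [Function.update_of_ne hj]
          exact hyball j
      · have hmem : x - unitv d i ∈ Dset := by
          apply hxN
          refine ⟨i, Or.inr ?_⟩
          funext j
          by_cases hj : j = i <;> simp [Pi.add_apply, Pi.sub_apply, unitv, hj]
        have hxd : x - unitv d i = Function.update x i (x i - 1) := by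
          funext j
          by_cases hj : j = i
          · subst hj; simp [Function.update_self, Pi.sub_apply, unitv]
          · simp [Function.update_of_ne hj, Pi.sub_apply, unitv_ne _ hj]
        have hE : E (Function.update x i (x i - 1), i) := by
          apply hIfc
          rw [upd_sub]
          exact Or.inl ⟨by rw [← hxd]; exact hmem, hxD⟩
        refine ⟨(Function.update x i (x i - 1), i),
          mem_box_filter E z ?_ hE, rfl,
          fun hc => by omega, fun hc => by omega, fun _ => by rw [← hxd]; exact hmem⟩
        intro j
        by_cases hj : j = i
        · subst hj
          simp only [Function.update_self]
          have h1 := hxball j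
          have h2 := hdist j
          rw [hz] at h1 ⊢
          simp only [] at h1 ⊢
          rcases max_cases (x j) (y j) with ⟨hm, _⟩ | ⟨hm, _⟩ <;> rw [hm] at h1 ⊢ <;> omega
        · rw [Function.update_of_ne hj]
          exact hxball j
  obtain ⟨f, hf⟩ := choose_on hsel
  have hcard : I.card ≤ boxCount b Dset E z := by
    apply Finset.card_le_card_of_injOn f (fun p hp => (hf p hp).1)
    intro p hp q hq hfpq
    obtain ⟨_, hp2, hp3, hp4, hp5⟩ := hf p hp
    obtain ⟨_, hq2, hq3, hq4, hq5⟩ := hf q hq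
    rw [hfpq] at hp2 hp3 hp4 hp5
    have hpq1 : p.1 = q.1 := by rw [← hp2, ← hq2]
    rw [Finset.mem_coe, hI, Finset.mem_product, Finset.mem_Icc] at hp hq
    have hpk : (0:ℤ) ≤ p.2 ∧ p.2 ≤ 2 := hp.2
    have hqk : (0:ℤ) ≤ q.2 ∧ q.2 ≤ 2 := hq.2
    have hpq2 : p.2 = q.2 := by
      have hp2c : p.2 = 0 ∨ p.2 = 1 ∨ p.2 = 2 := by omega
      have hq2c : q.2 = 0 ∨ q.2 = 1 ∨ q.2 = 2 := by omega
      rcases hp2c with h | h | h <;> rcases hq2c with h' | h' | h' <;> try omega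
      · exact absurd ((hp3 h).symm.trans (hq4 h')) hxy
      · exact absurd (show x ∈ Dset by rw [← hp3 h]; exact hq5 h') hxD
      · exact absurd ((hq3 h').symm.trans (hp4 h)) hxy
      · exact absurd (show y ∈ Dset by rw [← hp4 h]; exact hq5 h') hyD
      · exact absurd (show x ∈ Dset by rw [← hq3 h']; exact hp5 h) hxD
      · exact absurd (show y ∈ Dset by rw [← hq4 h']; exact hp5 h) hyD
    exact Prod.ext hpq1 hpq2
  have hIcard : I.card = d * 3 := by
    rw [hI, Finset.card_product, Finset.card_univ, Fintype.card_fin, Int.card_Icc]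
    rfl
  omega

end Stmt15Aux

open Stmt15Aux in
/-- Sparseness of holes (Lemma 4.6).  Fix a decreasing function `g`, `ε ∈ (0,1)`, and a
deterministic environment `w` on the edges `(x, i)` of `(ℤ^d, 𝔈_d)`, `d ≥ 2`, with
`b ≥ 2d`.  Suppose for all large `n`, every box `B_b(z)` with `z ∈ B_{n+b}` contains at
most `3d−1` edges of conductance `≤ g(n^{1−ε})`, and let `D_n` be the unique infinite
open cluster of the environment in which edges with `w_e ≤ g(n^{1−ε})` are closed
(i.e. `D_n` is nonempty, consists exactly of the sites whose open cluster is infinite,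
and any two of its sites are open-connected).  Then for `n` large enough, the hole set
`I_n = B_n ∖ D_n` is `b`-sparse: every box `B_b(z)`, `z ∈ ℤ^d`, contains at most one
site of `I_n`. -/
theorem stmt15 (d b : ℕ) (hd : 2 ≤ d) (hb : 2 * d ≤ b)
    (ε : ℝ) (hε0 : 0 < ε) (hε1 : ε < 1)
    (w : ((Fin d → ℤ) × Fin d) → ℝ) (hwpos : ∀ e, 0 < w e)
    (g : ℝ → ℝ) (hganti : Antitone g) (hgpos : ∀ u, 0 < u → 0 < g u)
    (hg0 : Filter.Tendsto g Filter.atTop (nhds 0))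
    (openConn : ℕ → (Fin d → ℤ) → (Fin d → ℤ) → Prop)
    (hopenConn : ∀ n x y, openConn n x y ↔ Relation.ReflTransGen
      (fun a c => ∃ i : Fin d,
        (c = a + (fun j => if j = i then 1 else 0) ∧
          g ((n : ℝ) ^ ((1 : ℝ) - ε)) < w (a, i)) ∨
        (a = c + (fun j => if j = i then 1 else 0) ∧
          g ((n : ℝ) ^ ((1 : ℝ) - ε)) < w (c, i))) x y)
    (D : ℕ → Set (Fin d → ℤ))
    (hDne : ∀ n, (D n).Nonempty)
    (hDinf : ∀ n x, x ∈ D n ↔ {y | openConn n x y}.Infinite)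
    (hDconn : ∀ n, ∀ x ∈ D n, ∀ y ∈ D n, openConn n x y)
    (N0 : ℕ)
    (hcount : ∀ n ≥ N0, ∀ z : Fin d → ℤ, (∀ i, |z i| ≤ (n : ℤ) + b) →
      (((Fintype.piFinset fun i => Finset.Icc (z i - b) (z i + b)) ×ˢ
          (Finset.univ : Finset (Fin d))).filter
        (fun e => w e ≤ g ((n : ℝ) ^ ((1 : ℝ) - ε)))).card ≤ 3 * d - 1) :
    ∃ N : ℕ, ∀ n ≥ N, ∀ z : Fin d → ℤ,
      {x : Fin d → ℤ | (∀ i, |x i - z i| ≤ (b : ℤ)) ∧ (∀ i, |x i| ≤ (n : ℤ)) ∧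
        x ∉ D n}.Subsingleton := by
  classical
  -- the step relation agrees with unit vectors
  have hunit : ∀ i : Fin d, (fun j => if j = i then (1:ℤ) else 0) = unitv d i := by
    intro i; rfl
  -- monotonicity of the threshold
  have hthr : ∀ {m n : ℕ}, m ≤ n →
      g ((n : ℝ) ^ ((1 : ℝ) - ε)) ≤ g ((m : ℝ) ^ ((1 : ℝ) - ε)) := by
    intro m n hmn
    apply hganti
    apply Real.rpow_le_rpow (by positivity) (by exact_mod_cast hmn) (by linarith)
  have hconn_mono : ∀ {m n : ℕ}, m ≤ n → ∀ x y, openConn m x y → openConn n x y := by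
    intro m n hmn x y hxy
    rw [hopenConn] at hxy ⊢
    refine Relation.ReflTransGen.mono ?_ _ _ hxy
    rintro a c ⟨i, ⟨hc, hw⟩ | ⟨hc, hw⟩⟩
    · exact ⟨i, Or.inl ⟨hc, lt_of_le_of_lt (hthr hmn) hw⟩⟩
    · exact ⟨i, Or.inr ⟨hc, lt_of_le_of_lt (hthr hmn) hw⟩⟩
  have hDmono : ∀ {m n : ℕ}, m ≤ n → D m ⊆ D n := by
    intro m n hmn x hx
    rw [hDinf] at hx ⊢
    exact hx.mono (fun y hy => hconn_mono hmn _ _ hy)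
  -- symmetry and transitivity of openConn
  have hsymm : ∀ n x y, openConn n x y → openConn n y x := by
    intro n x y hxy
    rw [hopenConn] at hxy ⊢
    have hsy : Symmetric (fun a c => ∃ i : Fin d,
        (c = a + (fun j => if j = i then (1:ℤ) else 0) ∧
          g ((n : ℝ) ^ ((1 : ℝ) - ε)) < w (a, i)) ∨
        (a = c + (fun j => if j = i then 1 else 0) ∧
          g ((n : ℝ) ^ ((1 : ℝ) - ε)) < w (c, i))) := by
      rintro a c ⟨i, h | h⟩
      · exact ⟨i, Or.inr h⟩
      · exact ⟨i, Or.inl h⟩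
    exact (@Relation.ReflTransGen.stdSymm _ _ ⟨fun _ _ h => hsy h⟩).symm _ _ hxy
  have htrans : ∀ n x y z, openConn n x y → openConn n y z → openConn n x z := by
    intro n x y z h1 h2
    rw [hopenConn] at h1 h2 ⊢
    exact h1.trans h2
  have hDstep : ∀ n x y, x ∈ D n → openConn n x y → y ∈ D n := by
    intro n x y hx hxy
    rw [hDinf] at hx ⊢
    apply hx.mono
    intro z hz
    exact htrans n y x z (hsymm n x y hxy) hz
  -- interface edges are closed
  have hIfc : ∀ (n : ℕ) (p : Fin d → ℤ) (i : Fin d),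
      ((p ∈ D n ∧ p + unitv d i ∉ D n) ∨ (p ∉ D n ∧ p + unitv d i ∈ D n)) →
      (fun e => w e ≤ g ((n : ℝ) ^ ((1 : ℝ) - ε))) (p, i) := by
    intro n p i hcase
    show w (p, i) ≤ g ((n : ℝ) ^ ((1 : ℝ) - ε))
    by_contra hw
    push_neg at hw
    have hstep : openConn n p (p + unitv d i) := by
      rw [hopenConn]
      exact Relation.ReflTransGen.single ⟨i, Or.inl ⟨by rw [hunit], hw⟩⟩
    rcases hcase with ⟨h1, h2⟩ | ⟨h1, h2⟩
    · exact h2 (hDstep n p _ h1 hstep)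
    · exact h1 (hDstep n _ p h2 (hsymm n p _ hstep))
  -- chains inside D n
  have hDchain : ∀ n x y, x ∈ D n → y ∈ D n → SChain (D n) x y := by
    intro n x y hx hy
    have hconn := hDconn n x hx y hy
    rw [hopenConn] at hconn
    induction hconn with
    | refl => exact Relation.ReflTransGen.refl
    | tail hchain hstep ih =>
      rename_i c y'
      have hc : c ∈ D n := hDstep n x c hx (by rw [hopenConn]; exact hchain)
      have hy' : y' ∈ D n :=
        hDstep n x y' hx (by rw [hopenConn]; exact hchain.tail hstep)
      have hadj : Adj c y' := by
        obtain ⟨i, h | h⟩ := hstep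
        · exact ⟨i, Or.inl (by rw [← hunit i]; exact h.1)⟩
        · exact ⟨i, Or.inr (by rw [← hunit i]; exact h.1)⟩
      exact (ih hc).tail ⟨hadj, hy'⟩
  -- base point of the infinite cluster
  obtain ⟨y0, hy0⟩ := hDne N0
  set M : ℕ := Finset.univ.sup (fun i => (y0 i).natAbs) with hM
  refine ⟨max N0 M, ?_⟩
  intro n hn z₀ x hx y hy
  by_contra hxy
  obtain ⟨hxz, hxn, hxD⟩ := hx
  obtain ⟨hyz, hyn, hyD⟩ := hy
  have hnN0 : N0 ≤ n := le_trans (le_max_left _ _) hn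
  have hy0n : y0 ∈ D n := hDmono hnN0 hy0
  have hy0b : ∀ i, |y0 i| ≤ (n : ℤ) := by
    intro i
    have h1 : (y0 i).natAbs ≤ M := by
      rw [hM]
      exact Finset.le_sup (f := fun i => (y0 i).natAbs) (Finset.mem_univ i)
    have h2 : M ≤ n := le_trans (le_max_right _ _) hn
    rw [Int.abs_eq_natAbs]
    exact_mod_cast le_trans h1 h2
  -- the main contradiction machine for a hole with a hole neighbour
  have main : ∀ u : Fin d → ℤ, u ∉ D n → (∀ i, |u i| ≤ (n:ℤ)) →
      (∃ u', Adj u u' ∧ u' ∉ D n) → False := by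
    intro u huD hun hplus
    obtain ⟨hh, aa, hhh, haa, hadj2, hhull1, hhull2, hwit⟩ :=
      cross_lemma (S := D n) u huD hy0n
    have hplus2 : ∃ h', Adj hh h' ∧ h' ∉ D n := by
      rcases hwit with rfl | ⟨h', h1, h2, _⟩
      · exact hplus
      · exact ⟨h', h1, h2⟩
    have haan : ∀ i, |aa i| ≤ (n : ℤ) := by
      intro i
      have h1 := hhull2 i
      have h2 := hun i
      have h3 := hy0b i
      rw [abs_le] at *
      omega
    have hDInf : (D n).Infinite := by
      have h1 : {y | openConn n y0 y}.Infinite := (hDinf n y0).mp hy0n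
      apply h1.mono
      intro v hv
      exact hDstep n y0 v hy0n hv
    have hDfar : ∃ yfar, SChain (D n) aa yfar ∧ ¬ InBall aa ((b : ℤ) - 1) yfar := by
      obtain ⟨yfar, hyfD, hyfB⟩ := hDInf.exists_notMem_finset
        (Fintype.piFinset fun i => Finset.Icc (aa i - ((b:ℤ) - 1)) (aa i + ((b:ℤ) - 1)))
      refine ⟨yfar, hDchain n aa yfar haa hyfD, ?_⟩
      intro hball
      apply hyfB
      rw [Fintype.mem_piFinset]
      intro i
      rw [Finset.mem_Icc]
      exact hball i
    have h3d := core_count (D n)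
      (fun e => w e ≤ g ((n : ℝ) ^ ((1 : ℝ) - ε))) aa hd hb
      (hIfc n) haa hh hhh hadj2 hplus2 hDfar
    have hrange : ∀ i, |aa i| ≤ (n : ℤ) + b := by
      intro i
      have := haan i
      omega
    have hle := hcount n hnN0 aa hrange
    rw [boxCount] at h3d
    omega
  -- main case split
  by_cases hxiso : ∀ p, Adj x p → p ∈ D n
  · by_cases hyiso : ∀ p, Adj y p → p ∈ D n
    · -- both holes isolated : star count
      have hdist : ∀ i, x i - 2 * (b:ℤ) ≤ y i ∧ y i ≤ x i + 2 * (b:ℤ) := by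
        intro i
        have h1 := hxz i
        have h2 := hyz i
        rw [abs_le] at h1 h2
        omega
      have h3d := star_count (D n)
        (fun e => w e ≤ g ((n : ℝ) ^ ((1 : ℝ) - ε))) hd hb (hIfc n)
        x y hxy hdist hxD hyD hxiso hyiso
      have hrange : ∀ i, |(fun i => max (x i) (y i) - (b:ℤ)) i| ≤ (n : ℤ) + b := by
        intro i
        have h1 := hxn i
        have h2 := hyn i
        simp only []
        rcases max_cases (x i) (y i) with ⟨hm, _⟩ | ⟨hm, _⟩ <;> rw [hm] <;>
          rw [abs_le] at * <;> omega
      have hle := hcount n hnN0 _ hrange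
      rw [boxCount] at h3d
      omega
    · push_neg at hyiso
      obtain ⟨p, hp1, hp2⟩ := hyiso
      exact main y hyD hyn ⟨p, hp1, hp2⟩
  · push_neg at hxiso
    obtain ⟨p, hp1, hp2⟩ := hxiso
    exact main x hxD hxn ⟨p, hp1, hp2⟩
end

section
/- If the conductance distribution function F varies regularly at zero with index γ ≥ 0, then the distribution function F_π of the sum π of 2d independent copies of w varies regularly at zero with index 2dγ. -/
open MeasureTheory ProbabilityTheory Filter Topology Set

noncomputable section StmtAux

/-- Regular variation at `0⁺` with index `ρ`, expressed through ratio limits. -/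
def RV0 (G : ℝ → ℝ) (ρ : ℝ) : Prop :=
  (∀ᶠ u in 𝓝[>] (0:ℝ), 0 < G u) ∧
  ∀ C : ℝ, 0 < C → Tendsto (fun u => G (C * u) / G u) (𝓝[>] (0:ℝ)) (𝓝 (C ^ ρ))

lemma tendsto_mul_left_nhdsGT {C : ℝ} (hC : 0 < C) :
    Tendsto (fun u : ℝ => C * u) (𝓝[>] (0:ℝ)) (𝓝[>] (0:ℝ)) := by
  rw [tendsto_nhdsWithin_iff]
  refine ⟨?_, ?_⟩
  · have h : Tendsto (fun u : ℝ => C * u) (𝓝 0) (𝓝 (C * 0)) :=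
      (continuous_const.mul continuous_id).tendsto 0
    simpa using h.mono_left nhdsWithin_le_nhds
  · filter_upwards [self_mem_nhdsWithin] with u hu
    exact Set.mem_Ioi.2 (mul_pos hC hu)

lemma rpow_modulus {a : ℝ} (ha : 0 ≤ a) {ε : ℝ} (hε : 0 < ε) :
    ∃ δ > 0, ∀ x ∈ Set.Icc (0:ℝ) 1, ∀ y ∈ Set.Icc (0:ℝ) 1,
      |x - y| < δ → |x ^ a - y ^ a| < ε := by
  have hc : Continuous fun x : ℝ => x ^ a := by
    rcases eq_or_lt_of_le ha with h | h
    · have : (fun x : ℝ => x ^ a) = fun _ => (1:ℝ) := by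
        funext x; rw [← h, Real.rpow_zero]
      rw [this]; exact continuous_const
    · exact continuous_iff_continuousAt.2 fun x =>
        Real.continuousAt_rpow_const x a (Or.inr h.le)
  have hu := (isCompact_Icc : IsCompact (Set.Icc (0:ℝ) 1)).uniformContinuousOn_of_continuous
    hc.continuousOn
  rw [Metric.uniformContinuousOn_iff] at hu
  obtain ⟨δ, hδ, h⟩ := hu ε hε
  exact ⟨δ, hδ, fun x hx y hy hxy => by
    simpa [Real.dist_eq] using h x hx y hy (by simpa [Real.dist_eq] using hxy)⟩

/-- Partition points: `pt k 0 = -1` (so that `Fy (pt k 0 * u) = 0`), `pt k j = j/k`. -/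
def pt (k j : ℕ) : ℝ := if j = 0 then -1 else (j : ℝ) / k

/-- Limit values of `Fy (pt k j * u) / Fy u`. -/
def phiF (b : ℝ) (k j : ℕ) : ℝ := if j = 0 then 0 else ((j : ℝ) / k) ^ b

def lowS (Fy Gx : ℝ → ℝ) (k : ℕ) (u : ℝ) : ℝ :=
  ∑ i ∈ Finset.range (k - 1),
    (Fy (pt k (i + 1) * u) - Fy (pt k i * u)) * Gx ((1 - ((i : ℝ) + 1) / k) * u)

def upS (Fy Gx : ℝ → ℝ) (k : ℕ) (u : ℝ) : ℝ :=
  ∑ i ∈ Finset.range k,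
    (Fy (pt k (i + 1) * u) - Fy (pt k i * u)) * Gx ((1 - (i : ℝ) / k) * u)

def sloS (a b : ℝ) (k : ℕ) : ℝ :=
  ∑ i ∈ Finset.range (k - 1),
    (phiF b k (i + 1) - phiF b k i) * (1 - ((i : ℝ) + 1) / k) ^ a

def supS (a b : ℝ) (k : ℕ) : ℝ :=
  ∑ i ∈ Finset.range k,
    (phiF b k (i + 1) - phiF b k i) * (1 - (i : ℝ) / k) ^ a

lemma phiF_nonneg (b : ℝ) (k i : ℕ) : 0 ≤ phiF b k i := by
  rcases Nat.eq_zero_or_pos i with rfl | hi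
  · simp [phiF]
  · simp only [phiF, if_neg hi.ne']
    positivity

lemma phiF_mono {b : ℝ} (hb : 0 ≤ b) (k i : ℕ) : phiF b k i ≤ phiF b k (i + 1) := by
  rcases Nat.eq_zero_or_pos i with rfl | hi
  · simpa [phiF] using Real.rpow_nonneg (by positivity : (0:ℝ) ≤ 1 / (k:ℝ)) b
  · simp only [phiF, if_neg hi.ne', if_neg (Nat.succ_ne_zero i)]
    rcases Nat.eq_zero_or_pos k with rfl | hk
    · simp
    · refine Real.rpow_le_rpow (by positivity) ?_ hb
      have hkr : (0:ℝ) < (k:ℝ) := by exact_mod_cast hk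
      exact (div_le_div_iff_of_pos_right hkr).2 (by exact_mod_cast Nat.le_succ i)

lemma gapS {a b : ℝ} (ha : 0 ≤ a) (hb : 0 ≤ b) {ε : ℝ} (hε : 0 < ε) :
    ∃ k, 2 ≤ k ∧ supS a b k - sloS a b k < ε := by
  obtain ⟨δa, hδa, hma⟩ := rpow_modulus ha (show (0:ℝ) < ε/3 by linarith)
  obtain ⟨δb, hδb, hmb⟩ := rpow_modulus hb (show (0:ℝ) < ε/3 by linarith)
  obtain ⟨k, hk⟩ := exists_nat_gt (max 2 (1 / min δa δb))
  have hk2 : 2 ≤ k := by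
    have h2 : (2:ℝ) < k := lt_of_le_of_lt (le_max_left _ _) hk
    exact_mod_cast h2.le
  obtain ⟨m, rfl⟩ : ∃ m, k = m + 2 := ⟨k - 2, by omega⟩
  refine ⟨m + 2, le_add_self, ?_⟩
  have hKpos : (0:ℝ) < ((m + 2 : ℕ) : ℝ) := by positivity
  have hmin : 0 < min δa δb := lt_min hδa hδb
  have hδ : 1 / ((m + 2 : ℕ) : ℝ) < min δa δb := by
    have h1 : 1 / min δa δb < ((m + 2 : ℕ) : ℝ) :=
      lt_of_le_of_lt (le_max_right 2 (1 / min δa δb)) hk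
    rw [div_lt_iff₀ hKpos]
    calc (1:ℝ) = (1 / min δa δb) * min δa δb := by field_simp
    _ < ((m + 2 : ℕ) : ℝ) * min δa δb := mul_lt_mul_of_pos_right h1 hmin
    _ = min δa δb * ((m + 2 : ℕ) : ℝ) := by ring
  have hδa' : 1 / ((m + 2 : ℕ) : ℝ) < δa := lt_of_lt_of_le hδ (min_le_left _ _)
  have hδb' : 1 / ((m + 2 : ℕ) : ℝ) < δb := lt_of_lt_of_le hδ (min_le_right _ _)
  have hmem : ∀ i : ℕ, i ≤ m + 2 → (1 - (i:ℝ)/((m + 2 : ℕ) : ℝ)) ∈ Set.Icc (0:ℝ) 1 := by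
    intro i hi
    have hile : (i:ℝ) ≤ ((m + 2 : ℕ) : ℝ) := by exact_mod_cast hi
    constructor
    · rw [sub_nonneg, div_le_one hKpos]; exact hile
    · have : 0 ≤ (i:ℝ)/((m + 2 : ℕ) : ℝ) := by positivity
      linarith
  have hmemphi : ∀ i : ℕ, i ≤ m + 2 → ((i:ℝ)/((m + 2 : ℕ) : ℝ)) ∈ Set.Icc (0:ℝ) 1 := by
    intro i hi
    have hile : (i:ℝ) ≤ ((m + 2 : ℕ) : ℝ) := by exact_mod_cast hi
    exact ⟨by positivity, by rw [div_le_one hKpos]; exact hile⟩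
  -- difference of consecutive ψ values is small
  have hψdiff : ∀ i : ℕ, i ≤ m + 1 →
      (1 - (i:ℝ)/((m + 2 : ℕ) : ℝ)) ^ a - (1 - ((i:ℝ)+1)/((m + 2 : ℕ) : ℝ)) ^ a ≤ ε/3 := by
    intro i hi
    have h1 : (1 - (i:ℝ)/((m + 2 : ℕ) : ℝ)) ∈ Set.Icc (0:ℝ) 1 := hmem i (by omega)
    have h2 : (1 - ((i:ℝ)+1)/((m + 2 : ℕ) : ℝ)) ∈ Set.Icc (0:ℝ) 1 := by
      have := hmem (i+1) (by omega)
      rwa [Nat.cast_add, Nat.cast_one] at this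
    have hd : |(1 - (i:ℝ)/((m + 2 : ℕ) : ℝ)) - (1 - ((i:ℝ)+1)/((m + 2 : ℕ) : ℝ))| < δa := by
      rw [show (1 - (i:ℝ)/((m + 2 : ℕ) : ℝ)) - (1 - ((i:ℝ)+1)/((m + 2 : ℕ) : ℝ))
            = 1 / ((m + 2 : ℕ) : ℝ) by field_simp; ring]
      rw [abs_of_pos (by positivity)]
      exact hδa'
    have := hma _ h1 _ h2 hd
    calc (1 - (i:ℝ)/((m + 2 : ℕ) : ℝ)) ^ a - (1 - ((i:ℝ)+1)/((m + 2 : ℕ) : ℝ)) ^ a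
        ≤ |(1 - (i:ℝ)/((m + 2 : ℕ) : ℝ)) ^ a - (1 - ((i:ℝ)+1)/((m + 2 : ℕ) : ℝ)) ^ a| :=
          le_abs_self _
    _ ≤ ε/3 := this.le
  -- the tail term is small
  have htail : phiF b (m+2) (m+2) - phiF b (m+2) (m+1) < ε/3 := by
    have h1 : ((1:ℝ)) ∈ Set.Icc (0:ℝ) 1 := ⟨zero_le_one, le_refl 1⟩
    have h2 : (((m+1 : ℕ):ℝ)/((m + 2 : ℕ) : ℝ)) ∈ Set.Icc (0:ℝ) 1 := hmemphi (m+1) (by omega)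
    have hd : |(1:ℝ) - ((m+1 : ℕ):ℝ)/((m + 2 : ℕ) : ℝ)| < δb := by
      rw [show (1:ℝ) - ((m+1 : ℕ):ℝ)/((m + 2 : ℕ) : ℝ) = 1 / ((m + 2 : ℕ) : ℝ) by
        push_cast; field_simp; ring]
      rw [abs_of_pos (by positivity)]
      exact hδb'
    have hb1 : phiF b (m+2) (m+2) = 1 := by
      simp only [phiF, if_neg (Nat.succ_ne_zero _)]
      rw [div_self hKpos.ne', Real.one_rpow]
    have hlt := hmb _ h1 _ h2 hd
    rw [Real.one_rpow] at hlt
    have hb2 : phiF b (m+2) (m+1) = (((m+1 : ℕ):ℝ)/((m + 2 : ℕ) : ℝ)) ^ b := by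
      simp only [phiF, if_neg (Nat.succ_ne_zero _)]
    rw [hb1, hb2]
    exact lt_of_le_of_lt (le_abs_self _) hlt
  -- assemble
  have hsplit : supS a b (m+2) - sloS a b (m+2)
      = (∑ i ∈ Finset.range (m+1), (phiF b (m+2) (i+1) - phiF b (m+2) i)
          * ((1 - (i:ℝ)/((m + 2 : ℕ) : ℝ)) ^ a - (1 - ((i:ℝ)+1)/((m + 2 : ℕ) : ℝ)) ^ a))
        + (phiF b (m+2) (m+2) - phiF b (m+2) (m+1)) * (1 - ((m+1 : ℕ):ℝ)/((m + 2 : ℕ) : ℝ)) ^ a := by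
    rw [supS, sloS, show m + 2 - 1 = m + 1 from rfl, Finset.sum_range_succ]
    have hsum : (∑ i ∈ Finset.range (m+1),
          (phiF b (m+2) (i+1) - phiF b (m+2) i) * (1 - (i:ℝ)/((m+2:ℕ):ℝ)) ^ a)
        - (∑ i ∈ Finset.range (m+1),
          (phiF b (m+2) (i+1) - phiF b (m+2) i) * (1 - ((i:ℝ)+1)/((m+2:ℕ):ℝ)) ^ a)
        = ∑ i ∈ Finset.range (m+1), (phiF b (m+2) (i+1) - phiF b (m+2) i)
          * ((1 - (i:ℝ)/((m + 2 : ℕ) : ℝ)) ^ a - (1 - ((i:ℝ)+1)/((m + 2 : ℕ) : ℝ)) ^ a) := by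
      rw [← Finset.sum_sub_distrib]
      exact Finset.sum_congr rfl fun i _ => by ring
    linarith [hsum]
  rw [hsplit]
  have hmain : (∑ i ∈ Finset.range (m+1), (phiF b (m+2) (i+1) - phiF b (m+2) i)
      * ((1 - (i:ℝ)/((m + 2 : ℕ) : ℝ)) ^ a - (1 - ((i:ℝ)+1)/((m + 2 : ℕ) : ℝ)) ^ a)) ≤ ε/3 := by
    have hle : ∀ i ∈ Finset.range (m+1), (phiF b (m+2) (i+1) - phiF b (m+2) i)
        * ((1 - (i:ℝ)/((m + 2 : ℕ) : ℝ)) ^ a - (1 - ((i:ℝ)+1)/((m + 2 : ℕ) : ℝ)) ^ a)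
        ≤ (phiF b (m+2) (i+1) - phiF b (m+2) i) * (ε/3) := by
      intro i hi
      have hφ := phiF_mono hb (m+2) i
      exact mul_le_mul_of_nonneg_left
        (hψdiff i (by have := Finset.mem_range.1 hi; omega)) (by linarith)
    calc _ ≤ ∑ i ∈ Finset.range (m+1), (phiF b (m+2) (i+1) - phiF b (m+2) i) * (ε/3) :=
          Finset.sum_le_sum hle
    _ = (phiF b (m+2) (m+1) - phiF b (m+2) 0) * (ε/3) := by
          rw [← Finset.sum_mul, Finset.sum_range_sub (fun i => phiF b (m+2) i)]
    _ ≤ 1 * (ε/3) := by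
          apply mul_le_mul_of_nonneg_right _ (by linarith)
          have h0 : phiF b (m+2) 0 = 0 := by simp [phiF]
          have h1 : phiF b (m+2) (m+1) ≤ 1 := by
            simp only [phiF, if_neg (Nat.succ_ne_zero _)]
            exact Real.rpow_le_one (hmemphi (m+1) (by omega)).1 (hmemphi (m+1) (by omega)).2 hb
          linarith
    _ = ε/3 := one_mul _
  have htail2 : (phiF b (m+2) (m+2) - phiF b (m+2) (m+1))
      * (1 - ((m+1 : ℕ):ℝ)/((m + 2 : ℕ) : ℝ)) ^ a ≤ (phiF b (m+2) (m+2) - phiF b (m+2) (m+1)) := by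
    have hψ1 : (1 - ((m+1 : ℕ):ℝ)/((m + 2 : ℕ) : ℝ)) ^ a ≤ 1 :=
      Real.rpow_le_one (hmem (m+1) (by omega)).1 (hmem (m+1) (by omega)).2 ha
    have hφ := phiF_mono hb (m+2) (m+1)
    calc _ ≤ (phiF b (m+2) (m+2) - phiF b (m+2) (m+1)) * 1 :=
          mul_le_mul_of_nonneg_left hψ1 (by linarith)
    _ = _ := mul_one _
  linarith

lemma phi_tendsto {Fy : ℝ → ℝ} {b : ℝ}
    (hFb : RV0 Fy b) (hFyneg : ∀ t : ℝ, t < 0 → Fy t = 0) {k : ℕ} (hkpos : 0 < k) (j : ℕ) :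
    Tendsto (fun u => Fy (pt k j * u) / Fy u) (𝓝[>] (0:ℝ)) (𝓝 (phiF b k j)) := by
  rcases Nat.eq_zero_or_pos j with rfl | hj
  · have heq : (fun u : ℝ => Fy (pt k 0 * u) / Fy u) =ᶠ[𝓝[>] (0:ℝ)] fun _ => (0:ℝ) := by
      filter_upwards [self_mem_nhdsWithin] with u hu
      have hu0 : (0:ℝ) < u := hu
      rw [show pt k 0 = -1 from rfl, hFyneg _ (by nlinarith), zero_div]
    rw [show phiF b k 0 = 0 from rfl]
    exact Tendsto.congr' heq.symm tendsto_const_nhds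
  · have hkr : (0:ℝ) < (k:ℝ) := by exact_mod_cast hkpos
    have hjr : (0:ℝ) < (j:ℝ) := by exact_mod_cast hj
    have hjk : (0:ℝ) < (j:ℝ)/k := by positivity
    simpa [pt, phiF, hj.ne'] using hFb.2 _ hjk

lemma lowS_tendsto {Fy Gx : ℝ → ℝ} {a b : ℝ}
    (hFb : RV0 Fy b) (hGa : RV0 Gx a) (hFyneg : ∀ t : ℝ, t < 0 → Fy t = 0)
    {k : ℕ} (hk : 2 ≤ k) :
    Tendsto (fun u => lowS Fy Gx k u / (Fy u * Gx u)) (𝓝[>] (0:ℝ)) (𝓝 (sloS a b k)) := by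
  have hmain : ∀ u : ℝ, lowS Fy Gx k u / (Fy u * Gx u)
      = ∑ i ∈ Finset.range (k-1),
          (Fy (pt k (i+1) * u)/Fy u - Fy (pt k i * u)/Fy u)
            * (Gx ((1 - ((i:ℝ)+1)/k) * u) / Gx u) := by
    intro u
    rw [lowS, Finset.sum_div]
    exact Finset.sum_congr rfl fun i _ => by rw [mul_div_mul_comm, sub_div]
  refine Tendsto.congr (fun u => (hmain u).symm) ?_
  rw [sloS]
  refine tendsto_finset_sum _ fun i hi => ?_
  have hik : i + 1 < k := by have := Finset.mem_range.1 hi; omega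
  have hc : (0:ℝ) < 1 - ((i:ℝ)+1)/k := by
    have h1 : ((i:ℝ)+1)/k < 1 := by
      rw [div_lt_one (by exact_mod_cast (by omega : 0 < k) : (0:ℝ) < (k:ℝ))]
      exact_mod_cast hik
    linarith
  exact ((phi_tendsto hFb hFyneg (by omega : 0 < k) (i+1)).sub (phi_tendsto hFb hFyneg (by omega : 0 < k) i)).mul (hGa.2 _ hc)

lemma upS_tendsto {Fy Gx : ℝ → ℝ} {a b : ℝ}
    (hFb : RV0 Fy b) (hGa : RV0 Gx a) (hFyneg : ∀ t : ℝ, t < 0 → Fy t = 0)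
    {k : ℕ} (hk : 2 ≤ k) :
    Tendsto (fun u => upS Fy Gx k u / (Fy u * Gx u)) (𝓝[>] (0:ℝ)) (𝓝 (supS a b k)) := by
  have hmain : ∀ u : ℝ, upS Fy Gx k u / (Fy u * Gx u)
      = ∑ i ∈ Finset.range k,
          (Fy (pt k (i+1) * u)/Fy u - Fy (pt k i * u)/Fy u)
            * (Gx ((1 - (i:ℝ)/k) * u) / Gx u) := by
    intro u
    rw [upS, Finset.sum_div]
    exact Finset.sum_congr rfl fun i _ => by rw [mul_div_mul_comm, sub_div]
  refine Tendsto.congr (fun u => (hmain u).symm) ?_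
  rw [supS]
  refine tendsto_finset_sum _ fun i hi => ?_
  have hik : i < k := Finset.mem_range.1 hi
  have hc : (0:ℝ) < 1 - (i:ℝ)/k := by
    have h1 : (i:ℝ)/k < 1 := by
      rw [div_lt_one (by exact_mod_cast (by omega : 0 < k) : (0:ℝ) < (k:ℝ))]
      exact_mod_cast hik
    linarith
  exact ((phi_tendsto hFb hFyneg (by omega : 0 < k) (i+1)).sub (phi_tendsto hFb hFyneg (by omega : 0 < k) i)).mul (hGa.2 _ hc)

variable {Ω : Type*} [MeasurableSpace Ω]

lemma toReal_measure_Ioc (μ : Measure Ω) [IsProbabilityMeasure μ] {Y : Ω → ℝ}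
    (hY : Measurable Y) {α β : ℝ} (hαβ : α ≤ β) :
    (μ (Y ⁻¹' Set.Ioc α β)).toReal
      = (μ {ω | Y ω ≤ β}).toReal - (μ {ω | Y ω ≤ α}).toReal := by
  have h1 : Y ⁻¹' Set.Ioc α β = Y ⁻¹' Set.Iic β \ Y ⁻¹' Set.Iic α := by
    rw [← Set.preimage_diff, Set.Iic_sdiff_Iic]
  have hsub : Y ⁻¹' Set.Iic α ⊆ Y ⁻¹' Set.Iic β := fun ω h => le_trans h hαβ
  rw [h1, measure_diff hsub (hY measurableSet_Iic).nullMeasurableSet (measure_ne_top μ _),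
    ENNReal.toReal_sub_of_le (measure_mono hsub) (measure_ne_top μ _)]
  rfl

lemma indep_rect (μ : Measure Ω) [IsProbabilityMeasure μ] {X Y : Ω → ℝ}
    (hind : IndepFun X Y μ) (hY : Measurable Y) (c α β : ℝ) (hαβ : α ≤ β) :
    (μ (X ⁻¹' Set.Iic c ∩ Y ⁻¹' Set.Ioc α β)).toReal
      = (μ {ω | X ω ≤ c}).toReal
        * ((μ {ω | Y ω ≤ β}).toReal - (μ {ω | Y ω ≤ α}).toReal) := by
  rw [hind.measure_inter_preimage_eq_mul _ _ measurableSet_Iic measurableSet_Ioc,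
    ENNReal.toReal_mul, toReal_measure_Ioc μ hY hαβ]
  rfl

lemma pt_succ_eq {k : ℕ} (i : ℕ) : pt k (i + 1) = ((i:ℝ) + 1) / k := by
  simp only [pt, if_neg (Nat.succ_ne_zero i)]
  push_cast
  ring

lemma pt_le_succ {k : ℕ} (hk : 0 < k) (i : ℕ) : pt k i ≤ pt k (i + 1) := by
  have hkr : (0:ℝ) < (k:ℝ) := by exact_mod_cast hk
  rcases Nat.eq_zero_or_pos i with rfl | hi
  · rw [show pt k 0 = -1 from rfl, pt_succ_eq]
    have : (0:ℝ) ≤ ((0:ℝ) + 1) / k := by positivity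
    linarith
  · simp only [pt, if_neg hi.ne', if_neg (Nat.succ_ne_zero i)]
    exact (div_le_div_iff_of_pos_right hkr).2 (by exact_mod_cast Nat.le_succ i)

lemma lowS_le (μ : Measure Ω) [IsProbabilityMeasure μ] {X Y : Ω → ℝ}
    (hXm : Measurable X) (hYm : Measurable Y)
    (hind : IndepFun X Y μ) {k : ℕ} (hk : 2 ≤ k) {u : ℝ} (hu : 0 < u) :
    lowS (fun t => (μ {ω | Y ω ≤ t}).toReal) (fun t => (μ {ω | X ω ≤ t}).toReal) k u
      ≤ (μ {ω | X ω + Y ω ≤ u}).toReal := by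
  have hk0 : 0 < k := by omega
  set A : ℕ → Set Ω := fun i =>
    X ⁻¹' Set.Iic ((1 - ((i:ℝ)+1)/k) * u) ∩ Y ⁻¹' Set.Ioc (pt k i * u) (pt k (i+1) * u) with hA
  have hmeasA : ∀ i, MeasurableSet (A i) := fun i =>
    (hXm measurableSet_Iic).inter (hYm measurableSet_Ioc)
  have hterm : ∀ i ∈ Finset.range (k-1),
      ((μ {ω | Y ω ≤ pt k (i+1) * u}).toReal - (μ {ω | Y ω ≤ pt k i * u}).toReal)
        * (μ {ω | X ω ≤ (1 - ((i:ℝ)+1)/k) * u}).toReal = (μ (A i)).toReal := by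
    intro i _
    rw [hA, indep_rect μ hind hYm _ _ _
      (mul_le_mul_of_nonneg_right (pt_le_succ hk0 i) hu.le), mul_comm]
  have hdisj : (↑(Finset.range (k-1)) : Set ℕ).PairwiseDisjoint A := by
    have key : ∀ i j : ℕ, i < j → Disjoint (A i) (A j) := by
      intro i j hij
      refine Set.disjoint_of_subset Set.inter_subset_right Set.inter_subset_right ?_
      refine Disjoint.preimage _ ?_
      rw [Set.Ioc_disjoint_Ioc]
      have h1 : pt k (i+1) ≤ pt k j := by
        rw [pt_succ_eq]
        simp only [pt, if_neg (by omega : j ≠ 0)]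
        have hkr : (0:ℝ) < (k:ℝ) := by exact_mod_cast hk0
        exact (div_le_div_iff_of_pos_right hkr).2 (by exact_mod_cast hij)
      calc min (pt k (i+1) * u) (pt k (j+1) * u) ≤ pt k (i+1) * u := min_le_left _ _
      _ ≤ pt k j * u := mul_le_mul_of_nonneg_right h1 hu.le
      _ ≤ max (pt k i * u) (pt k j * u) := le_max_right _ _
    intro i _ j _ hij
    rcases lt_or_gt_of_ne hij with h | h
    · exact key i j h
    · exact (key j i h).symm
  have hsub : ∀ i ∈ Finset.range (k-1), A i ⊆ {ω | X ω + Y ω ≤ u} := by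
    intro i _ ω hω
    obtain ⟨hX, hY⟩ := hω
    simp only [Set.mem_preimage, Set.mem_Iic] at hX
    simp only [Set.mem_preimage, Set.mem_Ioc] at hY
    have hY2 := hY.2
    rw [pt_succ_eq] at hY2
    have hexp : (1 - ((i:ℝ)+1)/k) * u = u - ((i:ℝ)+1)/k * u := by ring
    simp only [Set.mem_setOf_eq]
    rw [hexp] at hX
    linarith
  calc lowS (fun t => (μ {ω | Y ω ≤ t}).toReal) (fun t => (μ {ω | X ω ≤ t}).toReal) k u
      = ∑ i ∈ Finset.range (k-1), (μ (A i)).toReal := Finset.sum_congr rfl hterm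
  _ = (∑ i ∈ Finset.range (k-1), μ (A i)).toReal :=
      (ENNReal.toReal_sum fun i _ => measure_ne_top μ _).symm
  _ = (μ (⋃ i ∈ Finset.range (k-1), A i)).toReal := by
      rw [measure_biUnion_finset hdisj fun i _ => hmeasA i]
  _ ≤ (μ {ω | X ω + Y ω ≤ u}).toReal := by
      refine (ENNReal.toReal_le_toReal (measure_ne_top μ _) (measure_ne_top μ _)).2 ?_
      exact measure_mono (Set.iUnion₂_subset hsub)

lemma le_upS (μ : Measure Ω) [IsProbabilityMeasure μ] {X Y : Ω → ℝ}
    (hXm : Measurable X) (hYm : Measurable Y)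
    (hXnn : ∀ ω, 0 ≤ X ω) (hYnn : ∀ ω, 0 ≤ Y ω)
    (hind : IndepFun X Y μ) {k : ℕ} (hk : 2 ≤ k) {u : ℝ} (hu : 0 < u) :
    (μ {ω | X ω + Y ω ≤ u}).toReal
      ≤ upS (fun t => (μ {ω | Y ω ≤ t}).toReal) (fun t => (μ {ω | X ω ≤ t}).toReal) k u := by
  have hk0 : 0 < k := by omega
  have hkr : (0:ℝ) < (k:ℝ) := by exact_mod_cast hk0
  set B : ℕ → Set Ω := fun i =>
    X ⁻¹' Set.Iic ((1 - (i:ℝ)/k) * u) ∩ Y ⁻¹' Set.Ioc (pt k i * u) (pt k (i+1) * u) with hB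
  have hterm : ∀ i ∈ Finset.range k,
      (μ (B i)).toReal =
      ((μ {ω | Y ω ≤ pt k (i+1) * u}).toReal - (μ {ω | Y ω ≤ pt k i * u}).toReal)
        * (μ {ω | X ω ≤ (1 - (i:ℝ)/k) * u}).toReal := by
    intro i _
    rw [hB, indep_rect μ hind hYm _ _ _
      (mul_le_mul_of_nonneg_right (pt_le_succ hk0 i) hu.le), mul_comm]
  have hcover : {ω | X ω + Y ω ≤ u} ⊆ ⋃ i ∈ Finset.range k, B i := by
    intro ω hω
    simp only [Set.mem_setOf_eq] at hω
    have hX0 := hXnn ω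
    have hY0 := hYnn ω
    have hYu : Y ω ≤ u := by linarith
    by_cases hc : Y ω ≤ 1/(k:ℝ) * u
    · refine Set.mem_biUnion (Finset.mem_range.2 hk0) ?_
      refine ⟨?_, ?_, ?_⟩
      · simp only [Set.mem_preimage, Set.mem_Iic, Nat.cast_zero, zero_div, sub_zero, one_mul]
        linarith
      · show pt k 0 * u < Y ω
        rw [show pt k 0 = -1 from rfl]
        nlinarith
      · show Y ω ≤ pt k (0+1) * u
        rw [pt_succ_eq]
        simpa using hc
    · push_neg at hc
      set mq := ⌈Y ω * k / u⌉₊ with hmq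
      have hq1 : (1:ℝ) < Y ω * k / u := by
        rw [lt_div_iff₀ hu]
        have h2 : (1/(k:ℝ)*u)*k < Y ω * k := mul_lt_mul_of_pos_right hc hkr
        have h3 : (1/(k:ℝ)*u)*k = u := by field_simp
        linarith
      have hm2 : 2 ≤ mq := by
        have h1 : 1 < mq := Nat.lt_ceil.2 (by exact_mod_cast hq1)
        omega
      have hmk : mq ≤ k := by
        apply Nat.ceil_le.2
        rw [div_le_iff₀ hu]
        nlinarith
      refine Set.mem_biUnion (Finset.mem_range.2 (by omega : mq - 1 < k)) ?_
      have hicast : ((mq - 1 : ℕ):ℝ) = (mq:ℝ) - 1 := by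
        push_cast [Nat.cast_sub (by omega : 1 ≤ mq)]
        ring
      have hlt : ((mq - 1 : ℕ):ℝ) < Y ω * k / u := Nat.lt_ceil.1 (by omega)
      have hYlow : ((mq - 1 : ℕ):ℝ)/k * u < Y ω := by
        rw [div_mul_eq_mul_div, div_lt_iff₀ hkr]
        rw [lt_div_iff₀ hu] at hlt
        nlinarith
      have hYhigh : Y ω ≤ (((mq - 1 : ℕ)):ℝ)/k * u + u/k := by
        have hle : Y ω * k / u ≤ (mq:ℝ) := Nat.le_ceil _
        rw [div_le_iff₀ hu] at hle
        have hre : ((mq - 1 : ℕ):ℝ)/k * u + u/k = (mq:ℝ) * u / k := by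
          rw [hicast]
          field_simp
          ring
        rw [hre, le_div_iff₀ hkr]
        linarith
      refine ⟨?_, ?_, ?_⟩
      · simp only [Set.mem_preimage, Set.mem_Iic]
        have hexp : (1 - ((mq - 1 : ℕ):ℝ)/k) * u = u - ((mq - 1 : ℕ):ℝ)/k * u := by ring
        rw [hexp]
        linarith
      · show pt k (mq - 1) * u < Y ω
        simp only [pt, if_neg (by omega : mq - 1 ≠ 0)]
        exact hYlow
      · show Y ω ≤ pt k (mq - 1 + 1) * u
        rw [pt_succ_eq]
        have : (((mq - 1:ℕ):ℝ) + 1)/k * u = ((mq - 1 : ℕ):ℝ)/k * u + u/k := by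
          field_simp
        rw [this]
        exact hYhigh
  have hsum_ne_top : (∑ i ∈ Finset.range k, μ (B i)) ≠ ⊤ :=
    (ENNReal.sum_lt_top.2 fun i _ => (measure_lt_top μ _)).ne
  calc (μ {ω | X ω + Y ω ≤ u}).toReal
      ≤ (∑ i ∈ Finset.range k, μ (B i)).toReal := by
        refine (ENNReal.toReal_le_toReal (measure_ne_top μ _) hsum_ne_top).2 ?_
        exact le_trans (measure_mono hcover) (measure_biUnion_finset_le _ _)
  _ = ∑ i ∈ Finset.range k, (μ (B i)).toReal :=
        ENNReal.toReal_sum fun i _ => measure_ne_top μ _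
  _ = upS (fun t => (μ {ω | Y ω ≤ t}).toReal) (fun t => (μ {ω | X ω ≤ t}).toReal) k u :=
        Finset.sum_congr rfl hterm

lemma RV0.conv (μ : Measure Ω) [IsProbabilityMeasure μ]
    {X Y : Ω → ℝ} (hXm : Measurable X) (hYm : Measurable Y)
    (hXnn : ∀ ω, 0 ≤ X ω) (hYnn : ∀ ω, 0 ≤ Y ω)
    (hind : IndepFun X Y μ) {a b : ℝ} (ha : 0 ≤ a) (hb : 0 ≤ b)
    (hGa : RV0 (fun t => (μ {ω | X ω ≤ t}).toReal) a)
    (hFb : RV0 (fun t => (μ {ω | Y ω ≤ t}).toReal) b) :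
    RV0 (fun t => (μ {ω | X ω + Y ω ≤ t}).toReal) (a + b) := by
  set Gx : ℝ → ℝ := fun t => (μ {ω | X ω ≤ t}).toReal with hGx
  set Fy : ℝ → ℝ := fun t => (μ {ω | Y ω ≤ t}).toReal with hFy
  set H : ℝ → ℝ := fun t => (μ {ω | X ω + Y ω ≤ t}).toReal with hH
  have hFyneg : ∀ t : ℝ, t < 0 → Fy t = 0 := by
    intro t ht
    have hset : {ω | Y ω ≤ t} = (∅ : Set Ω) := by
      ext ω
      simp only [Set.mem_setOf_eq, Set.mem_empty_iff_false, iff_false, not_le]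
      exact lt_of_lt_of_le ht (hYnn ω)
    rw [hFy]
    simp [hset]
  set r : ℝ → ℝ := fun u => H u / (Fy u * Gx u) with hr
  have hDpos : ∀ᶠ u in 𝓝[>] (0:ℝ), 0 < Fy u * Gx u := by
    filter_upwards [hFb.1, hGa.1] with u h1 h2
    exact mul_pos h1 h2
  have hsand : ∀ k : ℕ, 2 ≤ k → ∀ᶠ u in 𝓝[>] (0:ℝ),
      lowS Fy Gx k u / (Fy u * Gx u) ≤ r u ∧ r u ≤ upS Fy Gx k u / (Fy u * Gx u) := by
    intro k hk
    filter_upwards [hDpos, self_mem_nhdsWithin] with u hD hu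
    have hu0 : (0:ℝ) < u := hu
    constructor
    · exact (div_le_div_iff_of_pos_right hD).2 (lowS_le μ hXm hYm hind hk hu0)
    · exact (div_le_div_iff_of_pos_right hD).2 (le_upS μ hXm hYm hXnn hYnn hind hk hu0)
  have hcauchy : Cauchy (Filter.map r (𝓝[>] (0:ℝ))) := by
    rw [Metric.cauchy_iff]
    refine ⟨Filter.map_neBot, fun ε hε => ?_⟩
    obtain ⟨k, hk2, hgap⟩ := gapS ha hb (show (0:ℝ) < ε/4 by linarith)
    refine ⟨Set.Ioo (sloS a b k - ε/4) (supS a b k + ε/4), ?_, ?_⟩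
    · rw [Filter.mem_map]
      have h1 := (lowS_tendsto hFb hGa hFyneg hk2).eventually
        (eventually_gt_nhds (show sloS a b k - ε/4 < sloS a b k by linarith))
      have h2 := (upS_tendsto hFb hGa hFyneg hk2).eventually
        (eventually_lt_nhds (show supS a b k < supS a b k + ε/4 by linarith))
      filter_upwards [h1, h2, hsand k hk2] with u hu1 hu2 hsd
      exact ⟨lt_of_lt_of_le hu1 hsd.1, lt_of_le_of_lt hsd.2 hu2⟩
    · intro x hx y hy
      rw [Real.dist_eq, abs_lt]
      obtain ⟨hx1, hx2⟩ := hx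
      obtain ⟨hy1, hy2⟩ := hy
      constructor <;> linarith
  obtain ⟨c, hc⟩ := CompleteSpace.complete hcauchy
  have hrc : Tendsto r (𝓝[>] (0:ℝ)) (𝓝 c) := hc
  have hslo2 : 0 < sloS a b 2 := by
    rw [sloS, show (2:ℕ) - 1 = 1 from rfl, Finset.sum_range_one]
    simp only [phiF, if_neg one_ne_zero, if_pos rfl, Nat.cast_zero, Nat.cast_one,
      Nat.cast_ofNat, sub_zero]
    norm_num
    positivity
  have hcpos : 0 < c := by
    have hle : sloS a b 2 ≤ c := by
      refine le_of_tendsto_of_tendsto (lowS_tendsto hFb hGa hFyneg (le_refl 2)) hrc ?_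
      filter_upwards [hsand 2 (le_refl 2)] with u h
      exact h.1
    linarith
  constructor
  · filter_upwards [hDpos, hrc.eventually (eventually_gt_nhds (half_lt_self hcpos))]
      with u hD hru
    have hHu : H u = r u * (Fy u * Gx u) := (div_mul_cancel₀ _ hD.ne').symm
    rw [hHu]
    exact mul_pos (lt_trans (half_pos hcpos) hru) hD
  · intro C hC
    have hmap := tendsto_mul_left_nhdsGT hC
    have h1 : Tendsto (fun u => r (C*u) / r u) (𝓝[>] (0:ℝ)) (𝓝 1) := by
      have h := (hrc.comp hmap).div hrc hcpos.ne'
      rw [div_self hcpos.ne'] at h; exact h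
    have h2 := hFb.2 C hC
    have h3 := hGa.2 C hC
    have hev : ∀ᶠ u in 𝓝[>] (0:ℝ),
        H (C*u) / H u = (r (C*u) / r u) * ((Fy (C*u)/Fy u) * (Gx (C*u)/Gx u)) := by
      filter_upwards [hDpos, hmap.eventually hDpos] with u hD hDC
      have e1 : H (C*u) = r (C*u) * (Fy (C*u) * Gx (C*u)) := (div_mul_cancel₀ _ hDC.ne').symm
      have e2 : H u = r u * (Fy u * Gx u) := (div_mul_cancel₀ _ hD.ne').symm
      rw [e1, e2, mul_div_mul_comm]
      congr 1
      rw [mul_div_mul_comm]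
    have hfin : Tendsto (fun u => H (C*u)/H u) (𝓝[>] (0:ℝ)) (𝓝 (1 * (C^b * C^a))) :=
      Tendsto.congr' (by filter_upwards [hev] with u h; exact h.symm) (h1.mul (h2.mul h3))
    have hpow : (1:ℝ) * (C^b * C^a) = C^(a+b) := by
      rw [one_mul, ← Real.rpow_add hC, add_comm]
    rwa [hpow] at hfin

end StmtAux

/-- If the conductance distribution function `F` varies regularly at zero with index
`γ ≥ 0`, then the distribution function `F_π` of the sum `π` of `2d` independent copies
of `w` varies regularly at zero with index `2dγ`.  (Regular variation at zero of index
`ρ` means `F(u) = u^ρ L(u)` with `L(Cu)/L(u) → 1` as `u → 0⁺`, for every `C > 0`.) -/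
theorem stmt18 {Ω : Type*} [MeasurableSpace Ω] (μ : Measure Ω) [IsProbabilityMeasure μ]
    (d : ℕ) (hd : 0 < d) (γ : ℝ) (hγ : 0 ≤ γ)
    (w : Fin (2 * d) → Ω → ℝ)
    (hmeas : ∀ i, Measurable (w i))
    (hnn : ∀ i ω, 0 ≤ w i ω)
    (hindep : iIndepFun w μ)
    (hident : ∀ i j, IdentDistrib (w i) (w j) μ μ)
    (F Fpi : ℝ → ℝ)
    (hF : ∀ u, F u = (μ {ω | w ⟨0, by omega⟩ ω ≤ u}).toReal)
    (hFpi : ∀ u, Fpi u = (μ {ω | (∑ i, w i ω) ≤ u}).toReal)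
    (hRV : ∃ L : ℝ → ℝ, (∀ u : ℝ, 0 < u → F u = u ^ γ * L u) ∧
      ∀ C : ℝ, 0 < C → Tendsto (fun u => L (C * u) / L u)
        (nhdsWithin 0 (Set.Ioi 0)) (nhds 1)) :
    ∃ L : ℝ → ℝ, (∀ u : ℝ, 0 < u → Fpi u = u ^ (2 * (d : ℝ) * γ) * L u) ∧
      ∀ C : ℝ, 0 < C → Tendsto (fun u => L (C * u) / L u)
        (nhdsWithin 0 (Set.Ioi 0)) (nhds 1) := by
  classical
  obtain ⟨L0, hL0, hL0t⟩ := hRV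
  have hFnn : ∀ u, 0 ≤ F u := fun u => by rw [hF u]; exact ENNReal.toReal_nonneg
  have hLne : ∀ᶠ u in 𝓝[>] (0:ℝ), L0 u ≠ 0 := by
    have h1 := hL0t 1 one_pos
    simp only [one_mul] at h1
    have h2 := h1.eventually (eventually_ne_nhds (show (1:ℝ) ≠ 0 from one_ne_zero))
    filter_upwards [h2] with u hu h0
    exact hu (by rw [h0, div_zero])
  have hFrv : RV0 F γ := by
    constructor
    · filter_upwards [hLne, self_mem_nhdsWithin] with u hne hu
      have hu0 : (0:ℝ) < u := hu
      have hne2 : F u ≠ 0 := by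
        rw [hL0 u hu0]
        exact mul_ne_zero (Real.rpow_pos_of_pos hu0 γ).ne' hne
      exact (hFnn u).lt_of_ne (Ne.symm hne2)
    · intro C hC
      have hev : ∀ᶠ u in 𝓝[>] (0:ℝ), F (C*u) / F u = C^γ * (L0 (C*u) / L0 u) := by
        filter_upwards [self_mem_nhdsWithin, hLne] with u hu hne
        have hu0 : (0:ℝ) < u := hu
        rw [hL0 u hu0, hL0 (C*u) (mul_pos hC hu0), Real.mul_rpow hC.le hu0.le]
        have hne3 : u^γ ≠ 0 := (Real.rpow_pos_of_pos hu0 γ).ne'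
        field_simp
      have ht : Tendsto (fun u => C^γ * (L0 (C*u)/L0 u)) (𝓝[>] (0:ℝ)) (𝓝 (C^γ * 1)) :=
        (hL0t C hC).const_mul _
      rw [mul_one] at ht
      exact Tendsto.congr' (by filter_upwards [hev] with u h; exact h.symm) ht
  have hdf : ∀ i : Fin (2*d), ∀ u : ℝ, (μ {ω | w i ω ≤ u}).toReal = F u := by
    intro i u
    rw [hF u]
    congr 1
    have hmap := (hident i ⟨0, by omega⟩).map_eq
    calc μ {ω | w i ω ≤ u} = Measure.map (w i) μ (Set.Iic u) := by
          rw [Measure.map_apply (hmeas i) measurableSet_Iic]; rfl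
    _ = Measure.map (w ⟨0, by omega⟩) μ (Set.Iic u) := by rw [hmap]
    _ = μ {ω | w ⟨0, by omega⟩ ω ≤ u} := by
          rw [Measure.map_apply (hmeas _) measurableSet_Iic]; rfl
  have key : ∀ s : Finset (Fin (2*d)), s.Nonempty →
      RV0 (fun u => (μ {ω | (∑ i ∈ s, w i) ω ≤ u}).toReal) ((s.card : ℝ) * γ) := by
    intro s
    induction s using Finset.cons_induction with
    | empty => exact fun h => absurd h (by simp)
    | cons i s his ih =>
      intro _
      rcases s.eq_empty_or_nonempty with rfl | hs
      · have hfun : (fun u => (μ {ω | (∑ j ∈ Finset.cons i ∅ his, w j) ω ≤ u}).toReal) = F := by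
          funext u
          rw [← hdf i u]
          have hseteq : {ω | (∑ j ∈ Finset.cons i ∅ his, w j) ω ≤ u} = {ω | w i ω ≤ u} := by
            ext ω
            simp [Finset.sum_cons]
          rw [hseteq]
        have hcard : ((Finset.cons i ∅ his).card : ℝ) = 1 := by simp
        rw [hfun, hcard, one_mul]
        exact hFrv
      · have hXfun : (∑ j ∈ s, w j) = fun ω => ∑ j ∈ s, w j ω :=
          funext fun ω => Finset.sum_apply _ _ _
        have hXm : Measurable (∑ j ∈ s, w j) := by
          rw [hXfun]
          exact Finset.measurable_sum _ fun j _ => hmeas j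
        have hind' : IndepFun (∑ j ∈ s, w j) (w i) μ :=
          hindep.indepFun_finsetSum_of_notMem hmeas his
        have hXnn : ∀ ω, 0 ≤ (∑ j ∈ s, w j) ω := by
          intro ω
          rw [hXfun]
          exact Finset.sum_nonneg fun j _ => hnn j ω
        have hYrv : RV0 (fun t => (μ {ω | w i ω ≤ t}).toReal) γ := by
          have h := funext fun u => hdf i u
          rw [h]
          exact hFrv
        have hXrv := ih hs
        have hconv := RV0.conv μ hXm (hmeas i) hXnn (fun ω => hnn i ω) hind'
          (mul_nonneg (Nat.cast_nonneg _) hγ) hγ hXrv hYrv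
        have hset : (fun u => (μ {ω | (∑ j ∈ Finset.cons i s his, w j) ω ≤ u}).toReal)
            = (fun u => (μ {ω | (∑ j ∈ s, w j) ω + w i ω ≤ u}).toReal) := by
          funext u
          have hseteq : {ω | (∑ j ∈ Finset.cons i s his, w j) ω ≤ u}
              = {ω | (∑ j ∈ s, w j) ω + w i ω ≤ u} := by
            ext ω
            rw [Finset.sum_cons]
            simp only [Set.mem_setOf_eq, Pi.add_apply]
            constructor <;> intro h <;> linarith
          rw [hseteq]
        have hcard : ((Finset.cons i s his).card : ℝ) * γ = (s.card : ℝ)*γ + γ := by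
          rw [Finset.card_cons]
          push_cast
          ring
        rw [hset, hcard]
        exact hconv
  have huniv := key Finset.univ ⟨⟨0, by omega⟩, Finset.mem_univ _⟩
  have hcard2 : (Finset.univ : Finset (Fin (2*d))).card = 2*d := by simp
  have hcardu : ((Finset.univ : Finset (Fin (2*d))).card : ℝ) * γ = 2*(d:ℝ)*γ := by
    rw [hcard2]
    push_cast
    ring
  have hFpifun : (fun u => (μ {ω | (∑ i ∈ Finset.univ, w i) ω ≤ u}).toReal) = Fpi := by
    funext u
    rw [hFpi u]
    have hseteq : {ω | (∑ i ∈ Finset.univ, w i) ω ≤ u} = {ω | (∑ i, w i ω) ≤ u} := by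
      ext ω
      simp [Finset.sum_apply]
    rw [hseteq]
  rw [hFpifun, hcardu] at huniv
  refine ⟨fun u => Fpi u / u ^ (2*(d:ℝ)*γ), ?_, ?_⟩
  · intro u hu
    rw [mul_comm]
    exact (div_mul_cancel₀ _ (Real.rpow_pos_of_pos hu _).ne').symm
  · intro C hC
    have hCρ : (0:ℝ) < C ^ (2*(d:ℝ)*γ) := Real.rpow_pos_of_pos hC _
    have hev : ∀ᶠ u in 𝓝[>] (0:ℝ),
        (Fpi (C*u) / (C*u)^(2*(d:ℝ)*γ)) / (Fpi u / u^(2*(d:ℝ)*γ))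
          = (Fpi (C*u) / Fpi u) * (C^(2*(d:ℝ)*γ))⁻¹ := by
      filter_upwards [self_mem_nhdsWithin, huniv.1] with u hu hFpos
      have hu0 : (0:ℝ) < u := hu
      rw [Real.mul_rpow hC.le hu0.le]
      have h1 : u ^ (2*(d:ℝ)*γ) ≠ 0 := (Real.rpow_pos_of_pos hu0 _).ne'
      field_simp
    have ht : Tendsto (fun u => (Fpi (C*u)/Fpi u) * (C^(2*(d:ℝ)*γ))⁻¹) (𝓝[>] (0:ℝ))
        (𝓝 (C^(2*(d:ℝ)*γ) * (C^(2*(d:ℝ)*γ))⁻¹)) :=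
      (huniv.2 C hC).mul_const _
    rw [mul_inv_cancel₀ hCρ.ne'] at ht
    exact Tendsto.congr' (by filter_upwards [hev] with u h; exact h.symm) ht
end
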